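/- arXiv:1807.11026 — 3 statements merged into one kernel-verified Lean document; each statement's English description precedes it below -/
import Mathlib

section
/- Let (n_1, …, n_k) ∈ ℕ^k be syllable sizes, with SI/NSI syllable labels given by the combinatorial model applied to the word (n_1, …, n_k) (the labels depend only on the sizes |a_i|). Suppose the total number of SI crossings is even, the total number of NSI crossings is even, and the last maximal run of NSI syllables contains at least one crossing. Then, in the resolution game on (n_1, …, n_k), the second player can force the resulting word w = (s_1, …, s_k) to satisfy: w ≈ (2), or w ≈ (−2), or w ≈ (2, c) or w ≈ (−2, c) for some integer c. -/
/-- The three connectivity states of a partially built rational tangle: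
`H = {NW–NE, SW–SE}`, `V = {NW–SW, NE–SE}`, `X = {NW–SE, NE–SW}`. -/
inductive TState : Type
  | H
  | V
  | X
  deriving DecidableEq

/-- Effect of a bottom crossing (a twist of SW and SE) on the connectivity state. -/
def bstep : TState → TState
  | .H => .H
  | .V => .X
  | .X => .V

/-- Effect of a right crossing (a twist of NE and SE) on the connectivity state. -/
def rstep : TState → TState
  | .V => .V
  | .H => .X
  | .X => .H

/-- `step true` is a bottom crossing, `step false` is a right crossing. -/
def step : Bool → TState → TState
  | true => bstep
  | false => rstep

/-- The twist direction of the (0-based) `i`-th syllable: bottom iff `i` is even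
(1-based odd syllables are bottom twists). -/
def sylDir (i : ℕ) : Bool := decide (i % 2 = 0)

/-- The state in which a crossing of the (0-based) `i`-th syllable is a self-intersection:
`H` for bottom syllables, `V` for right syllables. -/
def siState (i : ℕ) : TState := if i % 2 = 0 then TState.H else TState.V

/-- Process a list of syllables starting from state `s`; the Boolean `b` records
whether the next syllable is a bottom syllable. Each syllable `a` applies
`|a|` crossings of the appropriate direction. -/
def runWord : List ℤ → Bool → TState → TState
  | [], _, s => s
  | a :: t, b, s => runWord t (!b) ((step b)^[a.natAbs] s)

/-- The connectivity state at the start of the (0-based) `i`-th syllable of the word `w`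
(a rational tangle word starts in state `V`). -/
def stateAt (w : List ℤ) (i : ℕ) : TState := runWord (w.take i) true TState.V

/-- The (0-based) `i`-th syllable of `w` is an SI syllable. -/
def IsSISyl (w : List ℤ) (i : ℕ) : Prop := stateAt w i = siState i

instance (w : List ℤ) (i : ℕ) : Decidable (IsSISyl w i) :=
  inferInstanceAs (Decidable (_ = _))

/-- `IsNSIRun w l r` : the syllables with (0-based) indices in `[l, r)` form a maximal run
of NSI syllables of `w`. -/
def IsNSIRun (w : List ℤ) (l r : ℕ) : Prop :=
  l < r ∧ r ≤ w.length ∧ (∀ j, l ≤ j → j < r → ¬ IsSISyl w j) ∧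
    (l = 0 ∨ IsSISyl w (l - 1)) ∧ (r = w.length ∨ IsSISyl w r)

/-- The last maximal run of NSI syllables: a maximal run such that every later syllable
is an SI syllable. -/
def IsLastNSIRun (w : List ℤ) (l r : ℕ) : Prop :=
  IsNSIRun w l r ∧ ∀ j, r ≤ j → j < w.length → IsSISyl w j

/-- Run shape (a): a single even syllable. -/
def RunA (w : List ℤ) (l r : ℕ) : Prop := r = l + 1 ∧ Even (w.getD l 0)

/-- Run shape (b): two consecutive odd syllables. -/
def RunB (w : List ℤ) (l r : ℕ) : Prop :=
  r = l + 2 ∧ Odd (w.getD l 0) ∧ Odd (w.getD (l + 1) 0)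

/-- Run shape (c): an odd syllable, then a nonempty string of even syllables,
then a final odd syllable. -/
def RunC (w : List ℤ) (l r : ℕ) : Prop :=
  l + 3 ≤ r ∧ Odd (w.getD l 0) ∧ Odd (w.getD (r - 1) 0) ∧
    ∀ j, l < j → j < r - 1 → Even (w.getD j 0)

/-- Run shape (a'): a single odd syllable. -/
def RunA' (w : List ℤ) (l r : ℕ) : Prop := r = l + 1 ∧ Odd (w.getD l 0)

/-- Run shape (b'): an odd syllable followed by a nonempty string of even syllables. -/
def RunB' (w : List ℤ) (l r : ℕ) : Prop :=
  l + 2 ≤ r ∧ Odd (w.getD l 0) ∧ ∀ j, l < j → j < r → Even (w.getD j 0)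

/-- The number of NSI crossings of the word `w`: the sum of `|a_i|` over the NSI
syllables `a_i` of `w`. -/
def nsiCrossings (w : List ℤ) : ℕ :=
  ∑ i ∈ Finset.range w.length, if IsSISyl w i then 0 else (w.getD i 0).natAbs

/-- The number of SI crossings of the word `w`: the sum of `|a_i|` over the SI
syllables `a_i` of `w`. -/
def siCrossings (w : List ℤ) : ℕ :=
  ∑ i ∈ Finset.range w.length, if IsSISyl w i then (w.getD i 0).natAbs else 0

/-- Tangle-word reduction: the smallest equivalence relation on nonempty finite
sequences of integers closed under the moves (0)–(5). -/
inductive TEq : List ℤ → List ℤ → Prop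
  /-- (0) `(a_1,…,a_k,0) ≈ (a_1,…,a_k)` -/
  | move0 (l : List ℤ) (h : l ≠ []) : TEq (l ++ [0]) l
  /-- (1) `(a_1,…,a_i,0,a_{i+1},…,a_n) ≈ (a_1,…,a_{i-1},a_i+a_{i+1},a_{i+2},…,a_n)` -/
  | move1 (l r : List ℤ) (a b : ℤ) : TEq (l ++ a :: 0 :: b :: r) (l ++ (a + b) :: r)
  /-- (2) `(a_1,…,a_i,0,0,a_{i+1},…,a_n) ≈ (a_1,…,a_i,a_{i+1},…,a_n)` -/
  | move2 (l r : List ℤ) (h : l ++ r ≠ []) : TEq (l ++ 0 :: 0 :: r) (l ++ r)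
  /-- (3) `(0,a+1,a_2,…,a_n) ≈ (0,a,a_2,…,a_n)` -/
  | move3 (a : ℤ) (r : List ℤ) : TEq (0 :: (a + 1) :: r) (0 :: a :: r)
  /-- (4) `(1,a,a_2,…,a_n) ≈ (a+1,a_2,…,a_n)` -/
  | move4 (a : ℤ) (r : List ℤ) : TEq (1 :: a :: r) ((a + 1) :: r)
  /-- (5) `(-1,a,a_2,…,a_n) ≈ (a-1,a_2,…,a_n)` -/
  | move5 (a : ℤ) (r : List ℤ) : TEq ((-1) :: a :: r) ((a - 1) :: r)
  | refl (l : List ℤ) : TEq l l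
  | symm {l₁ l₂ : List ℤ} : TEq l₁ l₂ → TEq l₂ l₁
  | trans {l₁ l₂ l₃ : List ℤ} : TEq l₁ l₂ → TEq l₂ l₃ → TEq l₁ l₃

section SignGame

variable {C : Type*} [Fintype C]

/-- A play of the sign-assignment game is a list of moves, each assigning a sign to a
crossing; it is legal if no crossing is chosen twice and every sign is `+1` or `-1`. -/
def LegalPlay (p : List (C × ℤ)) : Prop :=
  (p.map Prod.fst).Nodup ∧ ∀ m ∈ p, m.2 = 1 ∨ m.2 = -1

/-- The play `p` follows the strategy `σ` of the player who moves at all positions whose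
number of prior moves is congruent to `parity` mod 2 (`parity = 0`: first player;
`parity = 1`: second player). -/
def Follows (parity : ℕ) (σ : List (C × ℤ) → C × ℤ) (p : List (C × ℤ)) : Prop :=
  ∀ (i : ℕ) (hi : i < p.length), i % 2 = parity → p.get ⟨i, hi⟩ = σ (p.take i)

/-- The strategy `σ` always produces a legal move (an unchosen crossing with sign `±1`)
at the positions where its player is to move. -/
def LegalStrat (parity : ℕ) (σ : List (C × ℤ) → C × ℤ) : Prop :=
  ∀ p : List (C × ℤ), LegalPlay p → p.length % 2 = parity → p.length < Fintype.card C →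
    (σ p).1 ∉ p.map Prod.fst ∧ ((σ p).2 = 1 ∨ (σ p).2 = -1)

/-- The player moving at positions of parity `parity` can force the predicate `P` on
complete plays: they have a legal strategy such that every complete legal play following
it satisfies `P`. -/
def CanForce (parity : ℕ) (P : List (C × ℤ) → Prop) : Prop :=
  ∃ σ : List (C × ℤ) → C × ℤ, LegalStrat parity σ ∧
    ∀ p : List (C × ℤ), LegalPlay p → p.length = Fintype.card C → Follows parity σ p → P p

end SignGame

/-- The crossings of the resolution game on syllable sizes `n = (n_1, …, n_k)`:
pairs `(i, j)` with `i` a syllable index and `j < n_i`. -/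
abbrev Cr (n : List ℕ) : Type := Σ i : Fin n.length, Fin (n.get i)

/-- The resulting word `(s_1, …, s_k)` of a complete play of the resolution game:
`s_i` is the sum of the signs assigned to the crossings of the `i`-th syllable. -/
def result (n : List ℕ) (p : List (Cr n × ℤ)) : List ℤ :=
  (List.finRange n.length).map fun i =>
    ((p.filter fun m => decide (m.1.1 = i)).map Prod.snd).sum

/-- The tangle word associated to the syllable sizes `(n_1, …, n_k)`
(SI/NSI labels depend only on the sizes `|a_i|`). -/
def natWord (n : List ℕ) : List ℤ := n.map fun x => (x : ℤ)

/-! ### Part 1 : TEq reduction tools and good word shapes -/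

def Good (w : List ℤ) : Prop :=
  TEq w [2] ∨ TEq w [-2] ∨ ∃ c : ℤ, TEq w [2, c] ∨ TEq w [-2, c]

lemma teq_zero_cons (a : ℤ) (rest : List ℤ) (h : rest ≠ []) :
    TEq (0 :: a :: rest) rest := by
  have key : ∀ b : ℤ, TEq (0 :: b :: rest) (0 :: 0 :: rest) := by
    intro b
    induction b using Int.induction_on with
    | zero => exact TEq.refl _
    | succ k ih => exact TEq.trans (by exact_mod_cast TEq.move3 (k : ℤ) rest) ih
    | pred k ih =>
        refine TEq.trans (TEq.symm ?_) ih
        have := TEq.move3 (-(k : ℤ) - 1) rest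
        simpa [sub_add_cancel] using this
  have h2 : TEq (0 :: 0 :: rest) rest := by
    have := TEq.move2 [] rest (by simpa using h)
    simpa using this
  exact (key a).trans h2

lemma teq_pm_cons (s a : ℤ) (hs : s = 1 ∨ s = -1) (rest : List ℤ) :
    TEq (s :: a :: rest) ((a + s) :: rest) := by
  rcases hs with rfl | rfl
  · exact TEq.move4 a rest
  · simpa [sub_eq_add_neg] using TEq.move5 a rest

lemma teq_zeros (s : ℤ) (hs : s = 1 ∨ s = -1) (j : ℕ) (rest : List ℤ) :
    TEq (s :: (List.replicate j 0 ++ rest)) (s :: rest) := by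
  induction j with
  | zero => exact TEq.refl _
  | succ j ih =>
      have h1 : TEq (s :: 0 :: (List.replicate j 0 ++ rest))
          (s :: (List.replicate j 0 ++ rest)) := by
        simpa using teq_pm_cons s 0 hs (List.replicate j 0 ++ rest)
      simpa [List.replicate_succ] using h1.trans ih

/-- Shapes of words the second player forces. -/
inductive GW : List ℤ → Prop
  | ta (u : ℤ) : (u = 1 ∨ u = -1) → GW [2 * u]
  | tac (u c : ℤ) : (u = 1 ∨ u = -1) → GW [2 * u, c]
  | tb (s : ℤ) (j : ℕ) : (s = 1 ∨ s = -1) → GW (s :: (List.replicate j 0 ++ [s]))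
  | tbc (s c : ℤ) (j : ℕ) : (s = 1 ∨ s = -1) → GW (s :: (List.replicate j 0 ++ [s, c]))
  | bA (v : ℤ) (w : List ℤ) : GW w → GW (0 :: v :: w)
  | bBC (s v : ℤ) (j : ℕ) (w : List ℤ) : (s = 1 ∨ s = -1) → GW w →
      GW (s :: (List.replicate j 0 ++ (-s) :: v :: w))

lemma GW.ne_nil {w : List ℤ} (h : GW w) : w ≠ [] := by
  cases h <;> simp

lemma Good.of_teq {w w' : List ℤ} (h : TEq w' w) (hg : Good w) : Good w' := by
  rcases hg with h1 | h1 | ⟨c, h1 | h1⟩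
  · exact Or.inl (h.trans h1)
  · exact Or.inr (Or.inl (h.trans h1))
  · exact Or.inr (Or.inr ⟨c, Or.inl (h.trans h1)⟩)
  · exact Or.inr (Or.inr ⟨c, Or.inr (h.trans h1)⟩)

lemma good_two_mul (u : ℤ) (hu : u = 1 ∨ u = -1) : Good [2 * u] := by
  rcases hu with rfl | rfl
  · exact Or.inl (by norm_num; exact TEq.refl _)
  · refine Or.inr (Or.inl ?_); norm_num; exact TEq.refl _

lemma GW.good {w : List ℤ} (h : GW w) : Good w := by
  induction h with
  | ta u hu => exact good_two_mul u hu
  | tac u c hu =>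
      rcases hu with rfl | rfl
      · exact Or.inr (Or.inr ⟨c, Or.inl (by norm_num; exact TEq.refl _)⟩)
      · exact Or.inr (Or.inr ⟨c, Or.inr (by norm_num; exact TEq.refl _)⟩)
  | tb s j hs =>
      have h1 := teq_zeros s hs j [s]
      have h2 : TEq (s :: [s]) ((s + s) :: []) := teq_pm_cons s s hs []
      have : TEq (s :: (List.replicate j 0 ++ [s])) [2 * s] := by
        refine (h1.trans ?_); simpa [two_mul] using h2
      exact (good_two_mul s hs).of_teq this
  | tbc s c j hs =>
      have h1 := teq_zeros s hs j [s, c]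
      have h2 : TEq (s :: [s, c]) ((s + s) :: [c]) := teq_pm_cons s s hs [c]
      have h3 : TEq (s :: (List.replicate j 0 ++ [s, c])) [2 * s, c] := by
        refine h1.trans ?_; simpa [two_mul] using h2
      rcases hs with rfl | rfl
      · exact Or.inr (Or.inr ⟨c, Or.inl (by norm_num at h3 ⊢; exact h3)⟩)
      · exact Or.inr (Or.inr ⟨c, Or.inr (by norm_num at h3 ⊢; exact h3)⟩)
  | bA v w hw ih => exact ih.of_teq (teq_zero_cons v w hw.ne_nil)
  | bBC s v j w hs hw ih =>
      have h1 := teq_zeros s hs j ((-s) :: v :: w)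
      have h2 : TEq (s :: (-s) :: v :: w) ((-s + s) :: v :: w) :=
        teq_pm_cons s (-s) hs (v :: w)
      have h3 : TEq ((-s + s) :: v :: w) (0 :: v :: w) := by
        norm_num; exact TEq.refl _
      have h4 : TEq (0 :: v :: w) w := teq_zero_cons v w hw.ne_nil
      exact ih.of_teq (((h1.trans h2).trans h3).trans h4)
/-! ### Part 2 : state machine lemmas -/

lemma step_invol (b : Bool) (s : TState) : step b (step b s) = s := by
  cases b <;> cases s <;> rfl

lemma step_iterate_even (b : Bool) (s : TState) {c : ℕ} (hc : Even c) :
    (step b)^[c] s = s := by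
  obtain ⟨t, rfl⟩ := hc
  induction t with
  | zero => rfl
  | succ t ih =>
      have : t + 1 + (t + 1) = (t + t) + 2 := by ring
      rw [this, Function.iterate_add_apply]
      simpa [step_invol] using ih

lemma step_iterate_odd (b : Bool) (s : TState) {c : ℕ} (hc : Odd c) :
    (step b)^[c] s = step b s := by
  obtain ⟨t, rfl⟩ := hc
  rw [show 2 * t + 1 = (t + t) + 1 by ring, Function.iterate_add_apply,
    step_iterate_even b _ ⟨t, rfl⟩]
  rfl

lemma runWord_append (u v : List ℤ) (b : Bool) (s : TState) :
    runWord (u ++ v) b s = runWord v (xor (decide (u.length % 2 = 1)) b) (runWord u b s) := by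
  induction u generalizing b s with
  | nil => cases b <;> rfl
  | cons a u ih =>
      have hb : (decide ((u.length + 1) % 2 = 1) : Bool) = ! decide (u.length % 2 = 1) := by
        rcases Nat.mod_two_eq_zero_or_one u.length with hu | hu <;> simp [hu] <;> omega
      calc runWord ((a :: u) ++ v) b s
          = runWord (u ++ v) (!b) ((step b)^[a.natAbs] s) := rfl
        _ = runWord v (xor (decide (u.length % 2 = 1)) (!b))
              (runWord u (!b) ((step b)^[a.natAbs] s)) := ih _ _
        _ = runWord v (xor (decide ((a :: u).length % 2 = 1)) b) (runWord (a :: u) b s) := by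
            simp only [List.length_cons, hb]
            congr 1
            cases hd : (decide (u.length % 2 = 1)) <;> cases b <;> rfl

section StateLemmas

variable (w : List ℤ)

lemma stateAt_succ (i : ℕ) (hi : i < w.length) :
    stateAt w (i + 1) = (step (sylDir i))^[(w.getD i 0).natAbs] (stateAt w i) := by
  have htake : w.take (i + 1) = w.take i ++ [w.getD i 0] := by
    rw [List.take_succ]
    congr 1
    rw [List.getElem?_eq_getElem hi]
    simp [List.getD_eq_getElem?_getD, List.getElem?_eq_getElem hi]
  have hlen : (w.take i).length = i := by
    rw [List.length_take]; omega
  unfold stateAt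
  rw [htake, runWord_append, hlen]
  have hb : xor (decide (i % 2 = 1)) true = sylDir i := by
    rcases Nat.mod_two_eq_zero_or_one i with h | h <;> simp [sylDir, h] <;> omega
  rw [hb]
  rfl

lemma stateAt_succ_even (i : ℕ) (hi : i < w.length) (h : Even (w.getD i 0).natAbs) :
    stateAt w (i + 1) = stateAt w i := by
  rw [stateAt_succ w i hi, step_iterate_even _ _ h]

lemma stateAt_succ_odd (i : ℕ) (hi : i < w.length) (h : Odd (w.getD i 0).natAbs) :
    stateAt w (i + 1) = step (sylDir i) (stateAt w i) := by
  rw [stateAt_succ w i hi, step_iterate_odd _ _ h]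

lemma siState_step_fixed (i : ℕ) : step (sylDir i) (siState i) = siState i := by
  rcases Nat.mod_two_eq_zero_or_one i with h | h <;>
    simp [sylDir, siState, h, step, bstep, rstep]

lemma siState_succ (i : ℕ) : siState (i + 1) = (if i % 2 = 0 then TState.V else TState.H) := by
  rcases Nat.mod_two_eq_zero_or_one i with h | h <;>
    · have : (i + 1) % 2 = 1 - i % 2 := by omega
      simp [siState, this, h]

lemma siState_succ_ne (i : ℕ) : siState (i + 1) ≠ siState i := by
  rcases Nat.mod_two_eq_zero_or_one i with h | h <;>
    simp [siState_succ, siState, h] <;> omega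

lemma stateAt_succ_si (i : ℕ) (hi : i < w.length) (h : IsSISyl w i) :
    stateAt w (i + 1) = stateAt w i := by
  rw [stateAt_succ w i hi, h, Function.iterate_fixed (siState_step_fixed i), ← h]

lemma not_si_succ (i : ℕ) (hi : i < w.length) (h : IsSISyl w i) : ¬ IsSISyl w (i + 1) := by
  unfold IsSISyl at *
  rw [stateAt_succ_si w i hi h, h]
  exact fun hc => siState_succ_ne i (hc.symm ▸ rfl)

/-- At an NSI position with a non-X state, the state equals the *next* SI state. -/
lemma nsi_state_eq (i : ℕ) (hX : stateAt w i ≠ TState.X) (h : ¬ IsSISyl w i) :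
    stateAt w i = siState (i + 1) := by
  unfold IsSISyl at h
  have hp1 : (i + 1) % 2 = 1 - i % 2 := by omega
  rcases Nat.mod_two_eq_zero_or_one i with hp | hp <;>
    cases hs : stateAt w i <;> simp_all [siState, hp, hp1]

lemma si_of_even_nsi (i : ℕ) (hi : i < w.length) (hX : stateAt w i ≠ TState.X)
    (h : ¬ IsSISyl w i) (he : Even (w.getD i 0).natAbs) : IsSISyl w (i + 1) := by
  unfold IsSISyl
  rw [stateAt_succ_even w i hi he]
  exact nsi_state_eq w i hX h

lemma state_x_of_odd (i : ℕ) (hi : i < w.length) (hX : stateAt w i ≠ TState.X)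
    (h : ¬ IsSISyl w i) (ho : Odd (w.getD i 0).natAbs) : stateAt w (i + 1) = TState.X := by
  rw [stateAt_succ_odd w i hi ho, nsi_state_eq w i hX h, siState_succ]
  rcases Nat.mod_two_eq_zero_or_one i with hp | hp <;>
    simp [sylDir, hp, step, bstep, rstep]

lemma si_of_x_odd (i : ℕ) (hi : i < w.length) (hX : stateAt w i = TState.X)
    (ho : Odd (w.getD i 0).natAbs) : IsSISyl w (i + 1) := by
  unfold IsSISyl
  rw [stateAt_succ_odd w i hi ho, hX, siState_succ]
  rcases Nat.mod_two_eq_zero_or_one i with hp | hp <;>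
    simp [sylDir, hp, step, bstep, rstep]

lemma x_of_x_even (i : ℕ) (hi : i < w.length) (hX : stateAt w i = TState.X)
    (he : Even (w.getD i 0).natAbs) : stateAt w (i + 1) = TState.X := by
  rw [stateAt_succ_even w i hi he, hX]

lemma not_si_of_x (i : ℕ) (hX : stateAt w i = TState.X) : ¬ IsSISyl w i := by
  unfold IsSISyl
  rw [hX]
  rcases Nat.mod_two_eq_zero_or_one i with hp | hp <;> simp [siState, hp]

lemma stateAt_zero : stateAt w 0 = TState.V := rfl

lemma not_si_zero : ¬ IsSISyl w 0 := by
  unfold IsSISyl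
  rw [stateAt_zero]
  simp [siState]

end StateLemmas
/-! ### Part 3a : syllable-size helpers -/

namespace S16

variable (n : List ℕ)

/-- syllable size -/
def mm (i : ℕ) : ℕ := n.getD i 0

/-- SI syllable of the size word -/
def SI (i : ℕ) : Prop := IsSISyl (natWord n) i

instance : DecidablePred (SI n) := fun _ => inferInstanceAs (Decidable (_ = _))

/-- NSI syllable of odd size -/
def Nodd (i : ℕ) : Prop := ¬ SI n i ∧ Odd (mm n i)

instance : DecidablePred (Nodd n) := fun _ => instDecidableAnd

/-- total NSI crossings from syllable `a` on -/
def nsiSum (a : ℕ) : ℕ := ∑ i ∈ Finset.Ico a n.length, if SI n i then 0 else mm n i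

open Classical in
noncomputable def nxt (i : ℕ) : ℕ :=
  if h : ∃ p, i < p ∧ p < n.length ∧ Nodd n p then Nat.find h else 0

def prv (i : ℕ) : ℕ := Nat.findGreatest (Nodd n) (i - 1)

/-- the partner syllable of an odd NSI syllable -/
noncomputable def Q (i : ℕ) : ℕ := if i = 0 ∨ SI n (i - 1) then nxt n i else prv n i

lemma natWord_cons (a : ℕ) (t : List ℕ) : natWord (a :: t) = (a : ℤ) :: natWord t := rfl

lemma natWord_nil : natWord [] = [] := rfl

lemma natWord_length : (natWord n).length = n.length := by
  induction n with
  | nil => rfl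
  | cons a t ih => rw [natWord_cons, List.length_cons, List.length_cons, ih]

lemma natWord_getD (i : ℕ) : (natWord n).getD i 0 = (mm n i : ℤ) := by
  induction n generalizing i with
  | nil => simp [natWord_nil, mm]
  | cons a t ih =>
      rw [natWord_cons]
      cases i with
      | zero => simp [mm]
      | succ i => simpa [mm] using ih i

lemma natAbs_natWord (i : ℕ) : ((natWord n).getD i 0).natAbs = mm n i := by
  rw [natWord_getD]; exact Int.natAbs_natCast _

lemma nsiSum_zero : nsiSum n 0 = nsiCrossings (natWord n) := by
  unfold nsiSum nsiCrossings
  rw [Finset.range_eq_Ico, natWord_length]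
  refine Finset.sum_congr rfl fun i _ => ?_
  rw [natAbs_natWord]
  rfl

lemma nsiSum_succ (a : ℕ) (ha : a < n.length) :
    nsiSum n a = (if SI n a then 0 else mm n a) + nsiSum n (a + 1) := by
  unfold nsiSum
  rw [Finset.sum_eq_sum_Ico_succ_bot (by omega)]

lemma nsiSum_past (a : ℕ) (ha : n.length ≤ a) : nsiSum n a = 0 := by
  unfold nsiSum
  rw [Finset.Ico_eq_empty (by omega), Finset.sum_empty]

lemma siState_ne_X (i : ℕ) : siState i ≠ TState.X := by
  rcases Nat.mod_two_eq_zero_or_one i with h | h <;> simp [siState, h]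

/-- `w.drop b` as zeros followed by `w.drop c`. -/
lemma drop_zeros (w : List ℤ) : ∀ d b c, c - b ≤ d → b ≤ c → c ≤ w.length →
    (∀ q, b ≤ q → q < c → w.getD q 0 = 0) →
    w.drop b = List.replicate (c - b) 0 ++ w.drop c := by
  intro d
  induction d with
  | zero =>
      intro b c h1 h2 _ _
      have : b = c := by omega
      subst this
      simp
  | succ d ih =>
      intro b c h1 h2 hc hz
      rcases eq_or_lt_of_le h2 with rfl | hbc
      · simp
      · have hbw : b < w.length := by omega
        have h3 : w.drop b = w[b] :: w.drop (b + 1) := List.drop_eq_getElem_cons hbw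
        have hb0 : w[b] = (0 : ℤ) := by
          have := hz b le_rfl hbc
          rwa [List.getD_eq_getElem _ _ hbw] at this
        have h4 := ih (b + 1) c (by omega) (by omega) hc (fun q hq hq' => hz q (by omega) hq')
        rw [h3, hb0, h4]
        have : c - b = (c - (b + 1)) + 1 := by omega
        rw [this, List.replicate_succ]
        rfl

lemma drop_cons (w : List ℤ) (a : ℕ) (ha : a < w.length) :
    w.drop a = w.getD a 0 :: w.drop (a + 1) := by
  rw [List.drop_eq_getElem_cons ha, List.getD_eq_getElem _ _ ha]

end S16
/-! ### Part 3b : the inner scan through a run -/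

namespace S16

variable (n : List ℕ)

lemma st_succ_even (i : ℕ) (hi : i < n.length) (h : Even (mm n i)) :
    stateAt (natWord n) (i + 1) = stateAt (natWord n) i :=
  stateAt_succ_even _ i (by rw [natWord_length]; exact hi)
    (by rw [natAbs_natWord]; exact h)

lemma st_succ_si (i : ℕ) (hi : i < n.length) (h : SI n i) :
    stateAt (natWord n) (i + 1) = stateAt (natWord n) i :=
  stateAt_succ_si _ i (by rw [natWord_length]; exact hi) h

lemma st_not_si_succ (i : ℕ) (hi : i < n.length) (h : SI n i) : ¬ SI n (i + 1) :=
  not_si_succ _ i (by rw [natWord_length]; exact hi) h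

lemma st_si_of_even_nsi (i : ℕ) (hi : i < n.length)
    (hX : stateAt (natWord n) i ≠ TState.X) (h : ¬ SI n i) (he : Even (mm n i)) :
    SI n (i + 1) :=
  si_of_even_nsi _ i (by rw [natWord_length]; exact hi) hX h
    (by rw [natAbs_natWord]; exact he)

lemma st_x_of_odd (i : ℕ) (hi : i < n.length)
    (hX : stateAt (natWord n) i ≠ TState.X) (h : ¬ SI n i) (ho : Odd (mm n i)) :
    stateAt (natWord n) (i + 1) = TState.X :=
  state_x_of_odd _ i (by rw [natWord_length]; exact hi) hX h
    (by rw [natAbs_natWord]; exact ho)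

lemma st_si_of_x_odd (i : ℕ) (hi : i < n.length)
    (hX : stateAt (natWord n) i = TState.X) (ho : Odd (mm n i)) : SI n (i + 1) :=
  si_of_x_odd _ i (by rw [natWord_length]; exact hi) hX
    (by rw [natAbs_natWord]; exact ho)

lemma st_x_of_x_even (i : ℕ) (hi : i < n.length)
    (hX : stateAt (natWord n) i = TState.X) (he : Even (mm n i)) :
    stateAt (natWord n) (i + 1) = TState.X :=
  x_of_x_even _ i (by rw [natWord_length]; exact hi) hX
    (by rw [natAbs_natWord]; exact he)

lemma st_not_si_of_x (i : ℕ) (hX : stateAt (natWord n) i = TState.X) : ¬ SI n i :=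
  not_si_of_x _ i hX

lemma inner : ∀ N b, n.length - b ≤ N → b ≤ n.length → Odd (nsiSum n b) →
    stateAt (natWord n) b = TState.X →
    ∃ p, b ≤ p ∧ p < n.length ∧ Nodd n p ∧
      (∀ q, b ≤ q → q < p → ¬ SI n q ∧ Even (mm n q)) ∧
      (∀ q, b ≤ q → q ≤ p → stateAt (natWord n) q = TState.X) ∧
      SI n (p + 1) ∧ Even (nsiSum n (p + 2)) := by
  intro N
  induction N with
  | zero =>
      intro b h1 h2 hodd _
      have hb : b = n.length := by omega
      rw [hb, nsiSum_past n _ le_rfl] at hodd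
      simp at hodd
  | succ N ih =>
      intro b h1 h2 hodd hX
      rcases eq_or_lt_of_le h2 with rfl | hbk
      · rw [nsiSum_past n _ le_rfl] at hodd
        simp at hodd
      · have hnsib : ¬ SI n b := st_not_si_of_x n b hX
        have e1 : nsiSum n b = mm n b + nsiSum n (b + 1) := by
          rw [nsiSum_succ n b hbk, if_neg hnsib]
        by_cases ho : Odd (mm n b)
        · have hsi1 : SI n (b + 1) := st_si_of_x_odd n b hbk hX ho
          refine ⟨b, le_rfl, hbk, ⟨hnsib, ho⟩, ?_, ?_, hsi1, ?_⟩
          · intro q hq hq'; omega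
          · intro q hq hq'
            have : q = b := by omega
            rw [this]; exact hX
          · rcases le_or_gt n.length (b + 1) with hk1 | hk1
            · rw [nsiSum_past n _ (by omega)]; simp
            · have e2 : nsiSum n (b + 1) = nsiSum n (b + 2) := by
                rw [nsiSum_succ n (b + 1) hk1, if_pos hsi1]
                show 0 + nsiSum n (b + 2) = nsiSum n (b + 2)
                omega
              rw [Nat.even_iff]
              rw [Nat.odd_iff] at hodd ho
              omega
        · have he : Even (mm n b) := Nat.not_odd_iff_even.mp ho
          have hX' : stateAt (natWord n) (b + 1) = TState.X := st_x_of_x_even n b hbk hX he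
          have hodd' : Odd (nsiSum n (b + 1)) := by
            rw [Nat.odd_iff] at hodd ⊢
            rw [Nat.even_iff] at he
            omega
          obtain ⟨p, hp1, hp2, hp3, hint, hstates, hsi, hev⟩ :=
            ih (b + 1) (by omega) (by omega) hodd' hX'
          refine ⟨p, by omega, hp2, hp3, ?_, ?_, hsi, hev⟩
          · intro q hq hq'
            rcases eq_or_lt_of_le hq with rfl | h'
            · exact ⟨hnsib, he⟩
            · exact hint q (by omega) hq'
          · intro q hq hq'
            rcases eq_or_lt_of_le hq with rfl | h'
            · exact hX
            · exact hstates q (by omega) hq'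

end S16
/-! ### Part 3c : the outer structural induction -/

namespace S16

variable (n : List ℕ) (l : ℕ)

/-- Facts about the result word `w` provided by the game strategy. -/
def Efacts (w : List ℤ) : Prop :=
  (∀ i, i < n.length → ¬ SI n i → Even (mm n i) → (Even (mm n l) → i ≠ l) →
      w.getD i 0 = 0) ∧
  (Even (mm n l) → ∃ u, (u = 1 ∨ u = -1) ∧ w.getD l 0 = 2 * u) ∧
  (∀ i, i < n.length → Nodd n i → (w.getD i 0 = 1 ∨ w.getD i 0 = -1) ∧
      w.getD (Q n i) 0 = (if l ≤ i then 1 else -1) * w.getD i 0)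

/-- Pairing facts about odd NSI syllables. -/
def QFact (i : ℕ) : Prop :=
  Q n i < n.length ∧ Nodd n (Q n i) ∧ Q n (Q n i) = i ∧ Q n i ≠ i ∧ (l ≤ Q n i ↔ l ≤ i)

def Concl (a : ℕ) : Prop :=
  (∀ i, a ≤ i → i < n.length → Nodd n i → QFact n l i) ∧
  (∀ w : List ℤ, w.length = n.length → Efacts n l w → GW (w.drop a))

variable (r : ℕ) (hlr : IsLastNSIRun (natWord n) l r)
  (hpos : 0 < ∑ j ∈ Finset.Ico l r, n.getD j 0)

section WithHyp

include hlr

lemma hl_r : l < r := hlr.1.1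

lemma hr_k : r ≤ n.length := by
  have := hlr.1.2.1; rwa [natWord_length] at this

lemma hrun : ∀ j, l ≤ j → j < r → ¬ SI n j := hlr.1.2.2.1

lemma hl0 : l = 0 ∨ SI n (l - 1) := hlr.1.2.2.2.1

lemma hafter : ∀ j, r ≤ j → j < n.length → SI n j := fun j h1 h2 =>
  hlr.2 j h1 (by rw [natWord_length]; exact h2)

lemma hlk : l < n.length := lt_of_lt_of_le (hl_r n l r hlr) (hr_k n l r hlr)

lemma hnsil : ¬ SI n l := hrun n l r hlr l le_rfl (hl_r n l r hlr)

lemma hXl : stateAt (natWord n) l ≠ TState.X := by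
  by_cases h0 : l = 0
  · rw [h0, stateAt_zero]; simp
  · have hsi : SI n (l - 1) := (hl0 n l r hlr).resolve_left h0
    have h1 : l - 1 < n.length := by have := hlk n l r hlr; omega
    have h2 := st_succ_si n (l - 1) h1 hsi
    have h3 : l - 1 + 1 = l := by omega
    rw [h3] at h2
    rw [h2]
    have h4 : stateAt (natWord n) (l - 1) = siState (l - 1) := hsi
    rw [h4]
    exact siState_ne_X _

include hpos

/-- Conclusion at the start of the last run. -/
lemma tail_concl (hev : Even (nsiSum n l)) : Concl n l l := by
  have hlk' := hlk n l r hlr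
  have hnsil' := hnsil n l r hlr
  have hXl' := hXl n l r hlr
  by_cases hml : Even (mm n l)
  · -- last run is a single even syllable
    have hsi1 : SI n (l + 1) := st_si_of_even_nsi n l hlk' hXl' hnsil' hml
    have hr1 : r = l + 1 := by
      rcases lt_or_ge (l + 1) r with h | h
      · exact absurd hsi1 (hrun n l r hlr (l + 1) (by omega) h)
      · have := hl_r n l r hlr; omega
    have hpos' : 0 < mm n l := by
      have hsum : ∑ j ∈ Finset.Ico l r, n.getD j 0 = mm n l := by
        rw [hr1]
        rw [show Finset.Ico l (l + 1) = {l} by ext x; simp]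
        simp [mm]
      rwa [hsum] at hpos
    have hml2 : 2 ≤ mm n l := by
      rcases hml with ⟨t, ht⟩; omega
    have hk2 : n.length ≤ l + 2 := by
      by_contra h
      push_neg at h
      have hsi2 : SI n (l + 2) := hafter n l r hlr (l + 2) (by omega) h
      exact st_not_si_succ n (l + 1) (by omega) hsi1 hsi2
    constructor
    · intro i h1 h2 hi
      have : i = l ∨ i = l + 1 := by omega
      rcases this with rfl | rfl
      · exact absurd hi.2 (Nat.not_odd_iff_even.mpr hml)
      · exact absurd hsi1 hi.1
    · intro w hw hE
      obtain ⟨E0, ED, E1⟩ := hE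
      obtain ⟨u, hu, hwl⟩ := ED hml
      rw [drop_cons w l (by rw [hw]; exact hlk'), hwl]
      rcases le_or_gt n.length (l + 1) with hk1 | hk1
      · rw [List.drop_eq_nil_of_le (by rw [hw]; omega)]
        exact GW.ta u hu
      · rw [drop_cons w (l + 1) (by rw [hw]; omega),
          List.drop_eq_nil_of_le (show w.length ≤ l + 1 + 1 by rw [hw]; omega)]
        exact GW.tac u _ hu
  · -- last run starts with an odd syllable
    have hol : Odd (mm n l) := Nat.not_even_iff_odd.mp hml
    have hX1 : stateAt (natWord n) (l + 1) = TState.X :=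
      st_x_of_odd n l hlk' hXl' hnsil' hol
    have e1 : nsiSum n l = mm n l + nsiSum n (l + 1) := by
      rw [nsiSum_succ n l hlk', if_neg hnsil']
    have hodd1 : Odd (nsiSum n (l + 1)) := by
      rw [Nat.odd_iff] at hol ⊢
      rw [Nat.even_iff] at hev
      omega
    obtain ⟨p, hp1, hp2, hp3, hint, hstates, hsip, hevp2⟩ :=
      inner n n.length (l + 1) (by omega) (by omega) hodd1 hX1
    have hk2 : n.length ≤ p + 2 := by
      by_contra h
      push_neg at h
      have hrp : r ≤ p + 1 := by
        by_contra h2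
        push_neg at h2
        exact (hrun n l r hlr (p + 1) (by omega) h2) hsip
      have hsi2 : SI n (p + 2) := hafter n l r hlr (p + 2) (by omega) h
      exact st_not_si_succ n (p + 1) (by omega) hsip hsi2
    have hQl : Q n l = p := by
      unfold Q
      rw [if_pos (hl0 n l r hlr)]
      unfold nxt
      have hex : ∃ q, l < q ∧ q < n.length ∧ Nodd n q := ⟨p, by omega, hp2, hp3⟩
      rw [dif_pos hex, Nat.find_eq_iff]
      refine ⟨⟨by omega, hp2, hp3⟩, ?_⟩
      rintro q hq ⟨hq1, hq2, hq3⟩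
      exact (Nat.not_odd_iff_even.mpr (hint q (by omega) (by omega)).2) hq3.2
    have hRSp : ¬ (p = 0 ∨ SI n (p - 1)) := by
      push_neg
      refine ⟨by omega, ?_⟩
      rcases eq_or_lt_of_le (show l ≤ p - 1 by omega) with h | h
      · rw [← h]; exact hnsil'
      · exact (hint (p - 1) (by omega) (by omega)).1
    have hQp : Q n p = l := by
      unfold Q
      rw [if_neg hRSp]
      unfold prv
      rw [Nat.findGreatest_eq_iff]
      refine ⟨by omega, fun _ => ⟨hnsil', hol⟩, ?_⟩
      intro q hq1 hq2 hq3
      exact (Nat.not_odd_iff_even.mpr (hint q (by omega) (by omega)).2) hq3.2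
    constructor
    · intro i h1 h2 hi
      have hcase : i = l ∨ (l < i ∧ i < p) ∨ i = p ∨ i = p + 1 := by omega
      rcases hcase with rfl | ⟨hc1, hc2⟩ | rfl | rfl
      · exact ⟨hQl ▸ hp2, hQl ▸ hp3, by rw [hQl, hQp], by omega, by rw [hQl]; omega⟩
      · exact absurd hi.2 (Nat.not_odd_iff_even.mpr (hint i (by omega) hc2).2)
      · exact ⟨hQp ▸ hlk', hQp ▸ ⟨hnsil', hol⟩, by rw [hQp, hQl], by omega, by rw [hQp]; omega⟩
      · exact absurd hsip hi.1
    · intro w hw hE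
      obtain ⟨E0, ED, E1⟩ := hE
      obtain ⟨hs, hrel⟩ := E1 l hlk' ⟨hnsil', hol⟩
      have hwp : w.getD p 0 = w.getD l 0 := by
        rw [hQl, if_pos le_rfl, one_mul] at hrel
        exact hrel
      have hseg : w.drop (l + 1) = List.replicate (p - (l + 1)) 0 ++ w.drop p := by
        refine drop_zeros w p (l + 1) p (by omega) (by omega) (by rw [hw]; omega) ?_
        intro q hq hq'
        have hq2 := hint q hq hq'
        exact E0 q (by omega) hq2.1 hq2.2 (fun hml' => absurd hml' hml)
      rw [drop_cons w l (by rw [hw]; exact hlk'), hseg,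
        drop_cons w p (by rw [hw]; exact hp2), hwp]
      rcases le_or_gt n.length (p + 1) with hk1 | hk1
      · rw [List.drop_eq_nil_of_le (show w.length ≤ p + 1 by rw [hw]; omega)]
        exact GW.tb _ _ hs
      · rw [drop_cons w (p + 1) (by rw [hw]; omega),
          List.drop_eq_nil_of_le (show w.length ≤ p + 1 + 1 by rw [hw]; omega)]
        exact GW.tbc _ _ _ hs

/-- The main structural induction. -/
lemma outer : ∀ N a, l - a ≤ N → a ≤ l → (a = 0 ∨ SI n (a - 1)) →
    stateAt (natWord n) a ≠ TState.X → ¬ SI n a → Even (nsiSum n a) → Concl n l a := by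
  intro N
  induction N with
  | zero =>
      intro a h1 h2 _ _ _ hev
      have ha : a = l := by omega
      rw [ha] at hev ⊢
      exact tail_concl n l r hlr hpos hev
  | succ N ih =>
      intro a h1 h2 hrs hXa hnsia hev
      rcases eq_or_lt_of_le h2 with heq | hal
      · rw [heq] at hev ⊢
        exact tail_concl n l r hlr hpos hev
      · have hlk' := hlk n l r hlr
        have hnsil' := hnsil n l r hlr
        have hXl' := hXl n l r hlr
        have hak : a < n.length := by omega
        by_cases hma : Even (mm n a)
        · -- block A : a single even NSI syllable, then an SI syllable
          have hsi1 : SI n (a + 1) := st_si_of_even_nsi n a hak hXa hnsia hma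
          have ha1l : a + 1 < l := by
            rcases eq_or_lt_of_le (show a + 1 ≤ l by omega) with h | h
            · exact absurd (h ▸ hsi1) hnsil'
            · exact h
          have hst2 : stateAt (natWord n) (a + 2) ≠ TState.X := by
            have e2 : stateAt (natWord n) (a + 2) = stateAt (natWord n) (a + 1) :=
              st_succ_si n (a + 1) (by omega) hsi1
            have e3 : stateAt (natWord n) (a + 1) = stateAt (natWord n) a :=
              st_succ_even n a hak hma
            rw [e2, e3]; exact hXa
          have hnsia2 : ¬ SI n (a + 2) := st_not_si_succ n (a + 1) (by omega) hsi1
          have hev2 : Even (nsiSum n (a + 2)) := by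
            have e1 : nsiSum n a = mm n a + nsiSum n (a + 1) := by
              rw [nsiSum_succ n a hak, if_neg hnsia]
            have e2 : nsiSum n (a + 1) = nsiSum n (a + 2) := by
              rw [nsiSum_succ n (a + 1) (by omega), if_pos hsi1]
              show 0 + nsiSum n (a + 2) = nsiSum n (a + 2)
              omega
            rw [Nat.even_iff] at hev hma ⊢
            omega
          obtain ⟨ihQ, ihW⟩ := ih (a + 2) (by omega) (by omega)
            (Or.inr (show SI n (a + 2 - 1) from hsi1)) hst2 hnsia2 hev2
          constructor
          · intro i hi1 hi2 hi
            have : i = a ∨ i = a + 1 ∨ a + 2 ≤ i := by omega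
            rcases this with rfl | rfl | h
            · exact absurd hi.2 (Nat.not_odd_iff_even.mpr hma)
            · exact absurd hsi1 hi.1
            · exact ihQ i h hi2 hi
          · intro w hw hE
            have h0 : w.getD a 0 = 0 := hE.1 a hak hnsia hma (fun _ => by omega)
            rw [drop_cons w a (by rw [hw]; omega), h0,
              drop_cons w (a + 1) (by rw [hw]; omega)]
            exact GW.bA _ _ (ihW w hw hE)
        · -- block BC : odd syllable, evens, odd syllable, then an SI syllable
          have hoa : Odd (mm n a) := Nat.not_even_iff_odd.mp hma
          have hX1 : stateAt (natWord n) (a + 1) = TState.X :=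
            st_x_of_odd n a hak hXa hnsia hoa
          have e1 : nsiSum n a = mm n a + nsiSum n (a + 1) := by
            rw [nsiSum_succ n a hak, if_neg hnsia]
          have hodd1 : Odd (nsiSum n (a + 1)) := by
            rw [Nat.odd_iff] at hoa ⊢
            rw [Nat.even_iff] at hev
            omega
          obtain ⟨p, hp1, hp2, hp3, hint, hstates, hsip, hevp2⟩ :=
            inner n n.length (a + 1) (by omega) (by omega) hodd1 hX1
          have hpl : p < l := by
            by_contra h
            push_neg at h
            exact hXl' (hstates l (by omega) h)
          have hp1l : p + 1 < l := by
            rcases eq_or_lt_of_le (show p + 1 ≤ l by omega) with h | h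
            · exact absurd (h ▸ hsip) hnsil'
            · exact h
          have hstp2 : stateAt (natWord n) (p + 2) ≠ TState.X := by
            have e2 : stateAt (natWord n) (p + 2) = stateAt (natWord n) (p + 1) :=
              st_succ_si n (p + 1) (by omega) hsip
            have e3 : stateAt (natWord n) (p + 1) = siState (p + 1) := hsip
            rw [e2, e3]; exact siState_ne_X _
          have hnsip2 : ¬ SI n (p + 2) := st_not_si_succ n (p + 1) (by omega) hsip
          obtain ⟨ihQ, ihW⟩ := ih (p + 2) (by omega) (by omega)
            (Or.inr (show SI n (p + 2 - 1) from hsip)) hstp2 hnsip2 hevp2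
          have hQa : Q n a = p := by
            unfold Q
            rw [if_pos hrs]
            unfold nxt
            have hex : ∃ q, a < q ∧ q < n.length ∧ Nodd n q := ⟨p, by omega, hp2, hp3⟩
            rw [dif_pos hex, Nat.find_eq_iff]
            refine ⟨⟨by omega, hp2, hp3⟩, ?_⟩
            rintro q hq ⟨hq1, hq2, hq3⟩
            exact (Nat.not_odd_iff_even.mpr (hint q (by omega) (by omega)).2) hq3.2
          have hRSp : ¬ (p = 0 ∨ SI n (p - 1)) := by
            push_neg
            refine ⟨by omega, ?_⟩
            rcases eq_or_lt_of_le (show a ≤ p - 1 by omega) with h | h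
            · rw [← h]; exact hnsia
            · exact (hint (p - 1) (by omega) (by omega)).1
          have hQp : Q n p = a := by
            unfold Q
            rw [if_neg hRSp]
            unfold prv
            rw [Nat.findGreatest_eq_iff]
            refine ⟨by omega, fun _ => ⟨hnsia, hoa⟩, ?_⟩
            intro q hq1 hq2 hq3
            exact (Nat.not_odd_iff_even.mpr (hint q (by omega) (by omega)).2) hq3.2
          constructor
          · intro i hi1 hi2 hi
            have hcase : i = a ∨ (a < i ∧ i < p) ∨ i = p ∨ i = p + 1 ∨ p + 2 ≤ i := by omega
            rcases hcase with rfl | ⟨hc1, hc2⟩ | rfl | rfl | h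
            · exact ⟨hQa ▸ hp2, hQa ▸ hp3, by rw [hQa, hQp], by omega, by rw [hQa]; omega⟩
            · exact absurd hi.2 (Nat.not_odd_iff_even.mpr (hint i (by omega) hc2).2)
            · exact ⟨hQp ▸ hak, hQp ▸ ⟨hnsia, hoa⟩, by rw [hQp, hQa], by omega,
                by rw [hQp]; omega⟩
            · exact absurd hsip hi.1
            · exact ihQ i h hi2 hi
          · intro w hw hE
            obtain ⟨E0, ED, E1⟩ := id hE
            obtain ⟨hs, hrel⟩ := E1 a hak ⟨hnsia, hoa⟩
            have hwp : w.getD p 0 = -(w.getD a 0) := by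
              rw [hQa, if_neg (by omega), neg_one_mul] at hrel
              exact hrel
            have hseg : w.drop (a + 1) = List.replicate (p - (a + 1)) 0 ++ w.drop p := by
              refine drop_zeros w p (a + 1) p (by omega) (by omega) (by rw [hw]; omega) ?_
              intro q hq hq'
              have hq2 := hint q hq hq'
              exact E0 q (by omega) hq2.1 hq2.2 (fun _ => by omega)
            rw [drop_cons w a (by rw [hw]; omega), hseg,
              drop_cons w p (by rw [hw]; exact hp2), hwp,
              drop_cons w (p + 1) (by rw [hw]; omega)]
            exact GW.bBC _ _ _ _ hs (ihW w hw hE)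

/-- Structural conclusions at position 0. -/
lemma structure_main (hnsi : Even (nsiCrossings (natWord n))) : Concl n l 0 := by
  refine outer n l r hlr hpos l 0 (by omega) (by omega) (Or.inl rfl) ?_ ?_ ?_
  · rw [stateAt_zero]; simp
  · exact not_si_zero _
  · rw [nsiSum_zero]; exact hnsi

end WithHyp

end S16
/-! ### Part 4 : the pairing strategy -/

namespace S16

lemma nodup_fst_unique {α β : Type*} :
    ∀ (p : List (α × β)), (p.map Prod.fst).Nodup →
      ∀ mv ∈ p, ∀ mv' ∈ p, mv.1 = mv'.1 → mv = mv' := by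
  intro p
  induction p with
  | nil => intro _ mv h; simp at h
  | cons a t ih =>
      intro hp mv hmv mv' hmv' heq
      rw [List.map_cons, List.nodup_cons] at hp
      rcases List.mem_cons.mp hmv with rfl | hmv2 <;>
        rcases List.mem_cons.mp hmv' with rfl | hmv2'
      · rfl
      · exact absurd (heq ▸ List.mem_map_of_mem (f := Prod.fst) hmv2') hp.1
      · exact absurd (heq ▸ List.mem_map_of_mem (f := Prod.fst) hmv2) hp.1
      · exact ih hp.2 mv hmv2 mv' hmv2' heq

section Game

variable {C : Type*} [Fintype C] [DecidableEq C]

noncomputable def fresh (hne : Nonempty C) (p : List (C × ℤ)) : C :=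
  if h : ((Finset.univ : Finset C) \ (p.map Prod.fst).toFinset).Nonempty then h.choose
  else Classical.choice hne

lemma fresh_spec (hne : Nonempty C) (p : List (C × ℤ))
    (hlt : p.length < Fintype.card C) : fresh hne p ∉ p.map Prod.fst := by
  unfold fresh
  have h : ((Finset.univ : Finset C) \ (p.map Prod.fst).toFinset).Nonempty := by
    rw [Finset.sdiff_nonempty]
    intro hsub
    have h1 : (Finset.univ : Finset C).card ≤ (p.map Prod.fst).toFinset.card :=
      Finset.card_le_card hsub
    have h2 : (p.map Prod.fst).toFinset.card ≤ (p.map Prod.fst).length :=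
      (p.map Prod.fst).toFinset_card_le
    rw [Finset.card_univ] at h1
    rw [List.length_map] at h2
    omega
  rw [dif_pos h]
  have hspec := h.choose_spec
  rw [Finset.mem_sdiff] at hspec
  intro hmem
  exact hspec.2 (List.mem_toFinset.mpr hmem)

noncomputable def pairStrat (hne : Nonempty C) (f : C → C) (ε : C → ℤ)
    (p : List (C × ℤ)) : C × ℤ :=
  if h : p = [] then (fresh hne p, 1)
  else
    let mv := p.getLast h
    if f mv.1 ∈ p.map Prod.fst then (fresh hne p, 1) else (f mv.1, ε mv.1 * mv.2)

lemma pairStrat_legal (hne : Nonempty C) (f : C → C) (ε : C → ℤ)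
    (hε1 : ∀ x, ε x = 1 ∨ ε x = -1) : LegalStrat 1 (pairStrat hne f ε) := by
  intro p hp hodd hlen
  by_cases h : p = []
  · rw [h] at hodd; simp at hodd
  · unfold pairStrat
    rw [dif_neg h]
    set mv := p.getLast h with hmv
    by_cases h2 : f mv.1 ∈ p.map Prod.fst
    · rw [if_pos h2]
      exact ⟨fresh_spec hne p hlen, Or.inl rfl⟩
    · rw [if_neg h2]
      refine ⟨h2, ?_⟩
      have hmem : mv ∈ p := List.getLast_mem h
      rcases hε1 mv.1 with he | he <;> rcases hp.2 mv hmem with hv | hv <;>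
        rw [he, hv] <;> norm_num

lemma pairStrat_complete (hne : Nonempty C) (f : C → C) (ε : C → ℤ)
    (hf2 : ∀ x, f (f x) = x) (hff : ∀ x, f x ≠ x)
    (hε1 : ∀ x, ε x = 1 ∨ ε x = -1) (hεf : ∀ x, ε (f x) = ε x)
    (hcard : Even (Fintype.card C))
    (p : List (C × ℤ)) (hp : LegalPlay p) (hlen : p.length = Fintype.card C)
    (hfol : Follows 1 (pairStrat hne f ε) p) :
    ∃ g : C → ℤ, (∀ x, g x = 1 ∨ g x = -1) ∧ (∀ x, g (f x) = ε x * g x) ∧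
      p = (p.map Prod.fst).map (fun x => (x, g x)) := by
  have hnodup := hp.1
  -- the key pair structure of the play
  have key : ∀ t, 2*t ≤ p.length →
      (∀ x ∈ (p.take (2*t)).map Prod.fst, f x ∈ (p.take (2*t)).map Prod.fst) ∧
      (∀ t', t' < t → ∀ (h1 : 2*t'+1 < p.length) (h0 : 2*t' < p.length),
        p.get ⟨2*t'+1, h1⟩ =
          (f (p.get ⟨2*t', h0⟩).1, ε (p.get ⟨2*t', h0⟩).1 * (p.get ⟨2*t', h0⟩).2)) := by
    intro t
    induction t with
    | zero =>
        intro _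
        refine ⟨by simp, ?_⟩
        intro t' ht'
        omega
    | succ t ih =>
        intro hle
        obtain ⟨ihC, ihP⟩ := ih (by omega)
        have hi0 : 2*t < p.length := by omega
        have hi1 : 2*t+1 < p.length := by omega
        set mv := p.get ⟨2*t, hi0⟩ with hmvdef
        have htake1 : p.take (2*t+1) = p.take (2*t) ++ [mv] := by
          rw [List.take_succ]
          congr 1
          rw [List.getElem?_eq_getElem hi0]
          rfl
        have htake1ne : p.take (2*t+1) ≠ [] := by
          rw [htake1]; simp
        have hlast : (p.take (2*t+1)).getLast htake1ne = mv := by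
          have h1 : (p.take (2*t+1)).getLast? = some mv := by
            rw [htake1]; exact List.getLast?_concat
          have h2 : (p.take (2*t+1)).getLast? = some ((p.take (2*t+1)).getLast htake1ne) :=
            List.getLast?_eq_getLast _
          rw [h1] at h2
          exact (Option.some.injEq _ _ ▸ h2).symm
        -- the strategy branch is taken
        have hnotmem : f mv.1 ∉ (p.take (2*t+1)).map Prod.fst := by
          rw [htake1]
          intro hmem
          rw [List.map_append, List.mem_append] at hmem
          rcases hmem with hin | hin
          · have h2 : f (f mv.1) ∈ (p.take (2*t)).map Prod.fst := ihC _ hin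
            rw [hf2] at h2
            -- mv.1 occurs both at index 2t and within the first 2t entries
            have hsplit : p = p.take (2*t) ++ p.drop (2*t) := (List.take_append_drop _ _).symm
            have hnd : ((p.take (2*t)).map Prod.fst ++ (p.drop (2*t)).map Prod.fst).Nodup := by
              rw [← List.map_append, ← hsplit]; exact hnodup
            have hdisj := (List.nodup_append.mp hnd).2.2
            have hmem2 : mv.1 ∈ (p.drop (2*t)).map Prod.fst := by
              have hdrop : p.drop (2*t) = p.get ⟨2*t, hi0⟩ :: p.drop (2*t+1) :=
                List.drop_eq_getElem_cons hi0
              rw [hdrop]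
              exact List.mem_map_of_mem (f := Prod.fst) List.mem_cons_self
            exact hdisj _ h2 _ hmem2 rfl
          · simp at hin
            first
              | exact hff mv.1 hin
              | exact hff mv.1 hin.symm
        have hstep : p.get ⟨2*t+1, hi1⟩ = (f mv.1, ε mv.1 * mv.2) := by
          have := hfol (2*t+1) hi1 (by omega)
          rw [this]
          unfold pairStrat
          rw [dif_neg htake1ne]
          simp only [hlast]
          rw [if_neg hnotmem]
        have htake2 : p.take (2*(t+1)) = p.take (2*t) ++ [mv, p.get ⟨2*t+1, hi1⟩] := by
          have e1 : 2*(t+1) = (2*t+1)+1 := by ring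
          rw [e1, List.take_succ, htake1, List.getElem?_eq_getElem hi1]
          simp
        constructor
        · intro x hx
          rw [htake2, List.map_append, List.mem_append] at hx ⊢
          rcases hx with hx | hx
          · exact Or.inl (ihC x hx)
          · simp only [List.map_cons, List.map_nil, List.mem_cons, List.not_mem_nil,
              or_false] at hx
            rcases hx with hx | hx
            · right
              rw [hx, hstep]
              simp
            · right
              rw [hx, hstep]
              simp [hf2]
        · intro t' ht' h1 h0
          rcases Nat.lt_succ_iff_lt_or_eq.mp ht' with h | rfl
          · exact ihP t' h h1 h0
          · exact hstep
  -- every crossing is played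
  have hmemall : ∀ x : C, x ∈ p.map Prod.fst := by
    have hn1 : (p.map Prod.fst).toFinset.card = Fintype.card C := by
      rw [List.toFinset_card_of_nodup hnodup, List.length_map, hlen]
    have := Finset.eq_univ_of_card _ hn1
    intro x
    rw [← List.mem_toFinset, this]
    exact Finset.mem_univ x
  -- define the sign assignment
  set g : C → ℤ := fun x => ((p.find? (fun mv => decide (mv.1 = x))).getD (x, 0)).2 with hg
  have g_eq : ∀ mv ∈ p, g mv.1 = mv.2 := by
    intro mv hmv
    have hsome : (p.find? (fun q => decide (q.1 = mv.1))).isSome := by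
      rw [List.find?_isSome]
      exact ⟨mv, hmv, by simp⟩
    obtain ⟨mv', hmv'⟩ := Option.isSome_iff_exists.mp hsome
    have h1 : mv' ∈ p := List.mem_of_find?_eq_some hmv'
    have h2 : mv'.1 = mv.1 := by
      have := List.find?_some hmv'
      simpa using this
    have h3 : mv' = mv := nodup_fst_unique p hnodup mv' h1 mv hmv h2
    rw [hg]
    simp only [hmv', h3, Option.getD_some]
  have hpairs : ∀ x : C, ∃ i : ℕ, ∃ hi : i < p.length, (p.get ⟨i, hi⟩).1 = x := by
    intro x
    have := hmemall x
    rw [List.mem_iff_get] at this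
    obtain ⟨i, hget⟩ := this
    simp only [List.get_eq_getElem, List.getElem_map] at hget
    exact ⟨i.val, by simpa using i.isLt, hget⟩
  have hG1 : ∀ x, g x = 1 ∨ g x = -1 := by
    intro x
    obtain ⟨mv, hmv, heq⟩ := List.mem_map.mp (hmemall x)
    rw [← heq, g_eq mv hmv]
    exact hp.2 mv hmv
  have hlenE : Even p.length := by rw [hlen]; exact hcard
  obtain ⟨cc, hcc⟩ := hlenE
  have hG2 : ∀ x, g (f x) = ε x * g x := by
    intro x
    obtain ⟨i, hi, hx⟩ := hpairs x
    have hkey := (key (p.length / 2) (by omega)).2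
    rcases Nat.even_or_odd i with ⟨t, ht⟩ | ⟨t, ht⟩
    · -- x sits at an even position
      have h0 : 2*t < p.length := by omega
      have h1 : 2*t+1 < p.length := by omega
      have hstep := hkey t (by omega) h1 h0
      have hxeq : (p.get ⟨2*t, h0⟩).1 = x := by
        have hidx : (⟨2*t, h0⟩ : Fin p.length) = ⟨i, hi⟩ := by
          apply Fin.ext; simp; omega
        rw [hidx, hx]
      have e1 : g (f x) = (p.get ⟨2*t+1, h1⟩).2 := by
        have he := g_eq _ (List.get_mem p ⟨2*t+1, h1⟩)
        have hfst : (p.get ⟨2*t+1, h1⟩).1 = f x := by rw [hstep, hxeq]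
        rw [hfst] at he
        exact he
      have e2 : g x = (p.get ⟨2*t, h0⟩).2 := by
        rw [← hxeq]; exact g_eq _ (List.get_mem p ⟨2*t, h0⟩)
      have e3 := congrArg Prod.snd hstep
      simp only at e3
      rw [e1, e2, e3, hxeq]
    · -- x sits at an odd position
      have h1 : 2*t+1 < p.length := by omega
      have h0 : 2*t < p.length := by omega
      have hstep := hkey t (by omega) h1 h0
      set y := (p.get ⟨2*t, h0⟩).1 with hy
      have hxy : x = f y := by
        rw [← hx]
        have he : p.get ⟨i, hi⟩ = p.get ⟨2*t+1, h1⟩ := by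
          have hidx : (⟨i, hi⟩ : Fin p.length) = ⟨2*t+1, h1⟩ := by
            apply Fin.ext; simp; omega
          rw [hidx]
        rw [he, hstep]
      have hgy : g y = (p.get ⟨2*t, h0⟩).2 := g_eq _ (List.get_mem p ⟨2*t, h0⟩)
      have hgfy : g (f y) = ε y * (p.get ⟨2*t, h0⟩).2 := by
        have he := g_eq _ (List.get_mem p ⟨2*t+1, h1⟩)
        rw [hstep] at he
        exact he
      rw [hxy, hf2, hεf, hgy, hgfy]
      rcases hε1 y with he | he <;> rw [he] <;> ring
  refine ⟨g, hG1, hG2, ?_⟩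
  have : p.map (fun mv => (mv.1, g mv.1)) = p := by
    apply List.map_congr_left ?_ |>.trans (List.map_id p)
    intro mv hmv
    have := g_eq mv hmv
    rw [this]
    rfl
  rw [List.map_map]
  exact this.symm

end Game

end S16
/-! ### Part 5 : forcing a word shape -/

namespace S16

def wordOf (n : List ℕ) (g : Cr n → ℤ) : List ℤ :=
  (List.finRange n.length).map fun i =>
    ∑ x ∈ Finset.univ.filter (fun x : Cr n => x.1 = i), g x

lemma result_eq_wordOf (n : List ℕ) (p : List (Cr n × ℤ)) (g : Cr n → ℤ)
    (hmem : ∀ x : Cr n, x ∈ p.map Prod.fst) (hnodup : (p.map Prod.fst).Nodup)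
    (hpeq : p = (p.map Prod.fst).map (fun x => (x, g x))) :
    result n p = wordOf n g := by
  unfold result wordOf
  apply List.map_congr_left
  intro i _
  set L := p.map Prod.fst with hL
  have h1 : p.filter (fun m => decide (m.1.1 = i)) =
      (L.filter (fun x => decide (x.1 = i))).map (fun x => (x, g x)) := by
    conv_lhs => rw [hpeq]
    rw [List.filter_map]
    rfl
  rw [h1, List.map_map]
  have h2 : (Prod.snd ∘ fun x : Cr n => (x, g x)) = g := rfl
  rw [h2]
  have h3 : (L.filter (fun x => decide (x.1 = i))).toFinset.sum g =
      ((L.filter (fun x => decide (x.1 = i))).map g).sum :=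
    List.sum_toFinset g (hnodup.filter _)
  rw [← h3]
  congr 1
  ext y
  simp only [List.mem_toFinset, List.mem_filter, Finset.mem_filter, Finset.mem_univ,
    true_and, decide_eq_true_eq]
  exact ⟨fun h => h.2, fun h => ⟨hmem y, h⟩⟩

lemma canforce_of_pairing (n : List ℕ) (hne : Nonempty (Cr n)) (f : Cr n → Cr n)
    (ε : Cr n → ℤ) (hf2 : ∀ x, f (f x) = x) (hff : ∀ x, f x ≠ x)
    (hε1 : ∀ x, ε x = 1 ∨ ε x = -1) (hεf : ∀ x, ε (f x) = ε x)
    (hcard : Even (Fintype.card (Cr n)))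
    (P : List ℤ → Prop)
    (hP : ∀ g : Cr n → ℤ, (∀ x, g x = 1 ∨ g x = -1) → (∀ x, g (f x) = ε x * g x) →
      P (wordOf n g)) :
    CanForce (C := Cr n) 1 (fun p => P (result n p)) := by
  refine ⟨pairStrat hne f ε, pairStrat_legal hne f ε hε1, ?_⟩
  intro p hp hlen hfol
  obtain ⟨g, hG1, hG2, hpeq⟩ :=
    pairStrat_complete hne f ε hf2 hff hε1 hεf hcard p hp hlen hfol
  have hmem : ∀ x : Cr n, x ∈ p.map Prod.fst := by
    have hn1 : (p.map Prod.fst).toFinset.card = Fintype.card (Cr n) := by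
      rw [List.toFinset_card_of_nodup hp.1, List.length_map, hlen]
    have huniv := Finset.eq_univ_of_card _ hn1
    intro x
    rw [← List.mem_toFinset, huniv]
    exact Finset.mem_univ x
  rw [result_eq_wordOf n p g hmem hp.1 hpeq]
  exact hP g hG1 hG2

end S16
/-! ### Part 6 : pairing construction helpers -/

namespace S16

lemma exists_involution_of_even_card {α : Type*} [Fintype α] [DecidableEq α]
    (h : Even (Fintype.card α)) : ∃ φ : α → α, (∀ x, φ (φ x) = x) ∧ (∀ x, φ x ≠ x) := by
  obtain ⟨c, hc⟩ := h
  let e := Fintype.equivFinOfCardEq hc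
  have hflip : ∀ j : Fin (c + c), ∃ j' : Fin (c + c), j'.val ≠ j.val ∧
      (if j.val % 2 = 0 then j'.val = j.val + 1 else j'.val = j.val - 1) := by
    intro j
    have hj := j.isLt
    by_cases h2 : j.val % 2 = 0
    · exact ⟨⟨j.val + 1, by omega⟩, by simp [h2]⟩
    · exact ⟨⟨j.val - 1, by omega⟩, by simp [h2]; omega⟩
  classical
  set flip : Fin (c + c) → Fin (c + c) := fun j => (hflip j).choose with hflipdef
  have hflipspec : ∀ j, (flip j).val ≠ j.val ∧
      (if j.val % 2 = 0 then (flip j).val = j.val + 1 else (flip j).val = j.val - 1) :=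
    fun j => (hflip j).choose_spec
  have hflip2 : ∀ j, flip (flip j) = j := by
    intro j
    obtain ⟨hne, hval⟩ := hflipspec j
    obtain ⟨hne2, hval2⟩ := hflipspec (flip j)
    apply Fin.ext
    have hj := j.isLt
    by_cases h2 : j.val % 2 = 0
    · rw [if_pos h2] at hval
      rw [if_neg (by omega)] at hval2
      omega
    · rw [if_neg h2] at hval
      have : j.val ≥ 1 := by omega
      rw [if_pos (by omega)] at hval2
      omega
  refine ⟨fun x => e.symm (flip (e x)), fun x => ?_, fun x => ?_⟩
  · show e.symm (flip (e (e.symm (flip (e x))))) = x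
    rw [Equiv.apply_symm_apply, hflip2, Equiv.symm_apply_apply]
  · intro hx
    have : flip (e x) = e x := by
      have := congrArg e hx
      rwa [Equiv.apply_symm_apply] at this
    exact (hflipspec (e x)).1 (congrArg Fin.val this)

lemma sigma_ext_val {n : List ℕ} (x y : Cr n) (h1 : x.1.val = y.1.val)
    (h2 : x.2.val = y.2.val) : x = y := by
  obtain ⟨⟨i, hi⟩, j, hj⟩ := x
  obtain ⟨⟨i', hi'⟩, j', hj'⟩ := y
  have h1' : i = i' := h1
  subst h1'
  have h2' : j = j' := h2
  subst h2'
  rfl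

lemma pair_sum_Ico (h : ℕ → ℤ) (s : ℕ) : ∀ t, s ≤ t →
    (∀ a, s ≤ a → a < t → h (2*a+1) = - h (2*a)) →
    ∑ j ∈ Finset.Ico (2*s) (2*t), h j = 0 := by
  intro t
  induction t with
  | zero =>
      intro h1 _
      have : s = 0 := by omega
      subst this
      simp
  | succ t ih =>
      intro h1 hrel
      rcases eq_or_lt_of_le h1 with rfl | h2
      · simp
      · have hs : s ≤ t := by omega
        rw [show 2*(t+1) = (2*t+1)+1 by ring]
        rw [Finset.sum_Ico_succ_top (by omega), Finset.sum_Ico_succ_top (by omega)]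
        rw [ih hs (fun a ha ha' => hrel a ha (by omega)), hrel t hs (by omega)]
        ring

lemma even_sum_zero (M : ℕ) (hM : Even M) (h : ℕ → ℤ)
    (hrel : ∀ a, 2*a+1 < M → h (2*a+1) = - h (2*a)) :
    ∑ j ∈ Finset.range M, h j = 0 := by
  obtain ⟨t, rfl⟩ := hM
  rw [Finset.range_eq_Ico, show (0 : ℕ) = 2*0 by ring, show t + t = 2*t by ring]
  exact pair_sum_Ico h 0 t (by omega) (fun a _ ha' => hrel a (by omega))

lemma odd_sum_last (M : ℕ) (hM : Odd M) (h : ℕ → ℤ)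
    (hrel : ∀ a, 2*a+1 < M → h (2*a+1) = - h (2*a)) :
    ∑ j ∈ Finset.range M, h j = h (M - 1) := by
  obtain ⟨t, rfl⟩ := hM
  rw [Finset.sum_range_succ]
  rw [even_sum_zero (2*t) (by exact ⟨t, by ring⟩) h (fun a ha => hrel a (by omega))]
  simp

lemma dbl_sum (M : ℕ) (hM : Even M) (hM2 : 2 ≤ M) (h : ℕ → ℤ)
    (h01 : h 1 = h 0)
    (hrel : ∀ a, 1 ≤ a → 2*a+1 < M → h (2*a+1) = - h (2*a)) :
    ∑ j ∈ Finset.range M, h j = 2 * h 0 := by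
  obtain ⟨t, rfl⟩ := hM
  rw [Finset.range_eq_Ico, ← Finset.sum_Ico_consecutive h (show 0 ≤ 2 by omega) (by omega)]
  have h2 : ∑ j ∈ Finset.Ico 0 2, h j = h 0 + h 1 := by
    rw [show (2:ℕ) = 0+1+1 from rfl, Finset.sum_Ico_succ_top (by omega),
      Finset.sum_Ico_succ_top (by omega)]
    simp
  have h3 : ∑ j ∈ Finset.Ico 2 (t + t), h j = 0 := by
    rw [show (2:ℕ) = 2*1 by ring, show t + t = 2*t by ring]
    exact pair_sum_Ico h 1 t (by omega) (fun a ha ha' => hrel a ha (by omega))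
  rw [h2, h3, h01]
  ring

lemma mm_get (n : List ℕ) (i : ℕ) (hi : i < n.length) : n.get ⟨i, hi⟩ = mm n i := by
  unfold mm
  rw [List.getD_eq_getElem _ _ hi]
  rfl

lemma sum_filter_sigma (n : List ℕ) (g : Cr n → ℤ) (i : Fin n.length) :
    ∑ x ∈ Finset.univ.filter (fun x : Cr n => x.1 = i), g x
      = ∑ j : Fin (n.get i), g ⟨i, j⟩ := by
  rw [Finset.sum_filter, ← Finset.univ_sigma_univ, Finset.sum_sigma]
  rw [Finset.sum_eq_single i]
  · apply Finset.sum_congr rfl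
    intro j _
    rw [if_pos rfl]
  · intro a _ ha
    apply Finset.sum_eq_zero
    intro j _
    rw [if_neg ha]
  · intro h
    exact absurd (Finset.mem_univ i) h

lemma wordOf_length (n : List ℕ) (g : Cr n → ℤ) : (wordOf n g).length = n.length := by
  unfold wordOf
  rw [List.length_map, List.length_finRange]

lemma wordOf_getD (n : List ℕ) (g : Cr n → ℤ) (i : ℕ) (hi : i < n.length) :
    (wordOf n g).getD i 0 = ∑ j : Fin (n.get ⟨i, hi⟩), g ⟨⟨i, hi⟩, j⟩ := by
  unfold wordOf
  rw [List.getD_eq_getElem _ _ (by rw [List.length_map, List.length_finRange]; exact hi)]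
  rw [List.getElem_map, List.getElem_finRange]
  exact sum_filter_sigma n g ⟨i, hi⟩ |>.trans rfl

/-- sum over a syllable as a range sum of an ℕ-indexed function -/
lemma syl_sum (n : List ℕ) (g : Cr n → ℤ) (i : ℕ) (hi : i < n.length) :
    ∑ j : Fin (n.get ⟨i, hi⟩), g ⟨⟨i, hi⟩, j⟩
      = ∑ j ∈ Finset.range (n.get ⟨i, hi⟩),
          (fun jj => if h' : jj < n.get ⟨i, hi⟩ then g ⟨⟨i, hi⟩, ⟨jj, h'⟩⟩ else 0) j := by
  rw [← Fin.sum_univ_eq_sum_range]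
  apply Finset.sum_congr rfl
  intro j _
  rw [dif_pos j.isLt]

end S16
/-! ### Part 7 : assembly -/

namespace S16

lemma get_eq_mm (n : List ℕ) (i : Fin n.length) : n.get i = mm n i.val := by
  rcases i with ⟨v, hv⟩
  exact mm_get n v hv

end S16

open S16

set_option maxHeartbeats 2000000

/-- if the syllable sizes `(n_1, …, n_k)` have an even total number of SI
crossings, an even total number of NSI crossings, and the last maximal run of NSI
syllables contains at least one crossing, then the second player can force the resulting
word `w` of the resolution game to satisfy `w ≈ (2)`, `w ≈ (-2)`, or `w ≈ (2, c)` or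
`w ≈ (-2, c)` for some integer `c`. -/
theorem second_forces_reduce_to_two (n : List ℕ)
    (hsi : Even (siCrossings (natWord n))) (hnsi : Even (nsiCrossings (natWord n)))
    (hlast : ∃ l r : ℕ, IsLastNSIRun (natWord n) l r ∧
      0 < ∑ j ∈ Finset.Ico l r, n.getD j 0) :
    CanForce (C := Cr n) 1 (fun p =>
      TEq (result n p) [2] ∨ TEq (result n p) [-2] ∨
      ∃ c : ℤ, TEq (result n p) [2, c] ∨ TEq (result n p) [-2, c]) := by
  classical
  obtain ⟨l, r, hlr, hpos⟩ := hlast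
  obtain ⟨hQF, hGW⟩ := S16.structure_main n l r hlr hpos hnsi
  have hlk : l < n.length := S16.hlk n l r hlr
  have hnsil : ¬ SI n l := S16.hnsil n l r hlr
  have hXl := S16.hXl n l r hlr
  -- the special even syllable, if the last run has shape (a), has at least 2 crossings
  have hml2 : Even (mm n l) → 2 ≤ mm n l := by
    intro hml
    have hsi1 : SI n (l + 1) := st_si_of_even_nsi n l hlk hXl hnsil hml
    have hr1 : r = l + 1 := by
      rcases lt_or_ge (l + 1) r with h | h
      · exact absurd hsi1 (S16.hrun n l r hlr (l + 1) (by omega) h)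
      · have := S16.hl_r n l r hlr; omega
    have hsum : ∑ j ∈ Finset.Ico l r, n.getD j 0 = mm n l := by
      rw [hr1, show Finset.Ico l (l + 1) = {l} by ext x; simp]
      simp [mm]
    rw [hsum] at hpos
    rcases hml with ⟨t, ht⟩
    omega
  -- nonempty crossing set
  have hne : Nonempty (Cr n) := by
    have hex : ∃ j, l ≤ j ∧ j < r ∧ 0 < n.getD j 0 := by
      by_contra h
      push_neg at h
      have hz : ∑ j ∈ Finset.Ico l r, n.getD j 0 = 0 :=
        Finset.sum_eq_zero fun j hj => by
          have hj' := Finset.mem_Ico.mp hj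
          have := h j hj'.1 hj'.2
          omega
      omega
    obtain ⟨j, hj1, hj2, hj3⟩ := hex
    have hjk : j < n.length := by have := S16.hr_k n l r hlr; omega
    exact ⟨⟨⟨j, hjk⟩, ⟨0, by rw [S16.mm_get n j hjk]; exact hj3⟩⟩⟩
  -- total number of crossings is even
  have hcardeq : Fintype.card (Cr n) = ∑ i ∈ Finset.range n.length, mm n i := by
    rw [Fintype.card_sigma]
    have h1 : ∀ i : Fin n.length, Fintype.card (Fin (n.get i)) = mm n i.val := by
      intro i
      rw [Fintype.card_fin, get_eq_mm]
    rw [Finset.sum_congr rfl (fun i _ => h1 i)]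
    exact Fin.sum_univ_eq_sum_range (fun i => mm n i) n.length
  have hsplit : siCrossings (natWord n) + nsiCrossings (natWord n)
      = ∑ i ∈ Finset.range n.length, mm n i := by
    unfold siCrossings nsiCrossings
    rw [natWord_length, ← Finset.sum_add_distrib]
    apply Finset.sum_congr rfl
    intro i _
    rw [natAbs_natWord]
    by_cases h : IsSISyl (natWord n) i
    · rw [if_pos h, if_pos h]; rfl
    · rw [if_neg h, if_neg h]; omega
  have hcard : Even (Fintype.card (Cr n)) := by
    rw [hcardeq, ← hsplit]
    exact hsi.add hnsi
  -- pairing for SI crossings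
  have hSIcard : Fintype.card {x : Cr n // SI n x.1.val} = siCrossings (natWord n) := by
    rw [Fintype.card_subtype, Finset.card_filter, ← Finset.univ_sigma_univ, Finset.sum_sigma]
    unfold siCrossings
    rw [natWord_length,
      ← Fin.sum_univ_eq_sum_range
        (fun i => if IsSISyl (natWord n) i then ((natWord n).getD i 0).natAbs else 0) n.length]
    apply Finset.sum_congr rfl
    intro i _
    by_cases h : IsSISyl (natWord n) i.val
    · rw [if_pos h, natAbs_natWord, ← get_eq_mm]
      have hone : ∀ j : Fin (n.get i), (if SI n ((⟨i, j⟩ : Cr n)).1.val then (1:ℕ) else 0) = 1 :=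
        fun j => if_pos h
      rw [Finset.sum_congr rfl (fun j _ => hone j)]
      simp
    · rw [if_neg h]
      apply Finset.sum_eq_zero
      intro j _
      exact if_neg h
  obtain ⟨φ, hφ2, hφn⟩ := exists_involution_of_even_card
    (α := {x : Cr n // SI n x.1.val}) (by rw [hSIcard]; exact hsi)
  -- the pairing
  set f : Cr n → Cr n := fun x =>
    if hsix : SI n x.1.val then (φ ⟨x, hsix⟩).val
    else if x.2.val % 2 = 1 then ⟨x.1, ⟨x.2.val - 1, by omega⟩⟩
    else if h2 : x.2.val + 1 < n.get x.1 then ⟨x.1, ⟨x.2.val + 1, h2⟩⟩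
    else if hq : Q n x.1.val < n.length ∧ 0 < mm n (Q n x.1.val) then
      ⟨⟨Q n x.1.val, hq.1⟩, ⟨n.get ⟨Q n x.1.val, hq.1⟩ - 1, by
        have := hq.2
        rw [← S16.mm_get n _ hq.1] at this
        omega⟩⟩
    else x
    with hfdef
  set ε : Cr n → ℤ := fun x =>
    if SI n x.1.val then (-1 : ℤ)
    else if Even (mm n l) ∧ x.1.val = l ∧ x.2.val < 2 then 1
    else if Odd (n.get x.1) ∧ x.2.val + 1 = n.get x.1 then
      (if l ≤ x.1.val then 1 else -1)
    else -1
    with hεdef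
  -- evaluation lemmas
  have hevalSI : ∀ (x : Cr n) (h : SI n x.1.val), f x = (φ ⟨x, h⟩).val := by
    intro x h
    simp only [hfdef]
    rw [dif_pos h]
  have hevalA : ∀ (x : Cr n), ¬ SI n x.1.val → x.2.val % 2 = 1 →
      f x = ⟨x.1, ⟨x.2.val - 1, by omega⟩⟩ := by
    intro x h hj
    simp only [hfdef]
    rw [dif_neg h, if_pos hj]
  have hevalB : ∀ (x : Cr n), ¬ SI n x.1.val → x.2.val % 2 = 0 →
      ∀ (h2 : x.2.val + 1 < n.get x.1), f x = ⟨x.1, ⟨x.2.val + 1, h2⟩⟩ := by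
    intro x h hj h2
    simp only [hfdef]
    rw [dif_neg h, if_neg (by omega), dif_pos h2]
  have hevalC : ∀ (x : Cr n), ¬ SI n x.1.val → x.2.val % 2 = 0 →
      x.2.val + 1 = n.get x.1 →
      ∀ (hq1 : Q n x.1.val < n.length) (hq2 : 0 < mm n (Q n x.1.val)),
      f x = ⟨⟨Q n x.1.val, hq1⟩, ⟨mm n (Q n x.1.val) - 1, by
        rw [S16.mm_get n _ hq1]; omega⟩⟩ := by
    intro x h hj hj1 hq1 hq2
    simp only [hfdef]
    rw [dif_neg h, if_neg (by omega), dif_neg (by omega), dif_pos ⟨hq1, hq2⟩]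
    apply sigma_ext_val
    · rfl
    · show n.get ⟨Q n x.1.val, hq1⟩ - 1 = mm n (Q n x.1.val) - 1
      rw [S16.mm_get n _ hq1]
  have hepsSI : ∀ (x : Cr n), SI n x.1.val → ε x = -1 := by
    intro x h
    simp only [hεdef]
    rw [if_pos h]
  have hepsN : ∀ (x : Cr n), ¬ SI n x.1.val →
      ε x = if Even (mm n l) ∧ x.1.val = l ∧ x.2.val < 2 then 1
        else if Odd (n.get x.1) ∧ x.2.val + 1 = n.get x.1 then
          (if l ≤ x.1.val then 1 else -1)
        else -1 := by
    intro x h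
    simp only [hεdef]
    rw [if_neg h]
  -- facts for the leftover crossings of odd NSI syllables
  have hQFx : ∀ (x : Cr n), ¬ SI n x.1.val → x.2.val % 2 = 0 → x.2.val + 1 = n.get x.1 →
      (Odd (mm n x.1.val) ∧ Q n x.1.val < n.length ∧ Nodd n (Q n x.1.val) ∧
       Q n (Q n x.1.val) = x.1.val ∧ Q n x.1.val ≠ x.1.val ∧
       (l ≤ Q n x.1.val ↔ l ≤ x.1.val)) := by
    intro x h hj hj1
    have hoM : Odd (mm n x.1.val) := by
      rw [← get_eq_mm, Nat.odd_iff]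
      omega
    have hQ := hQF x.1.val (by omega) x.1.isLt ⟨h, hoM⟩
    exact ⟨hoM, hQ.1, hQ.2.1, hQ.2.2.1, hQ.2.2.2.1, hQ.2.2.2.2⟩
  -- f is a fixed-point-free involution
  have hf2 : ∀ x, f (f x) = x := by
    intro x
    by_cases hsix : SI n x.1.val
    · rw [hevalSI x hsix]
      have h2 := (φ ⟨x, hsix⟩).2
      rw [hevalSI _ h2]
      have he : (⟨(φ ⟨x, hsix⟩).val, h2⟩ : {y : Cr n // SI n y.1.val}) = φ ⟨x, hsix⟩ := rfl
      rw [he, hφ2]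
    · have hxlt := x.2.isLt
      rcases Nat.mod_two_eq_zero_or_one x.2.val with hj0 | hj1
      · by_cases h2 : x.2.val + 1 < n.get x.1
        · rw [hevalB x hsix hj0 h2,
            hevalA (⟨x.1, ⟨x.2.val + 1, h2⟩⟩ : Cr n) hsix
              (show (x.2.val + 1) % 2 = 1 by omega)]
          exact sigma_ext_val _ _ rfl (show x.2.val + 1 - 1 = x.2.val by omega)
        · have hj1 : x.2.val + 1 = n.get x.1 := by omega
          obtain ⟨hoM, hq1, hqnodd, hQQ, hQne, hQiff⟩ := hQFx x hsix hj0 hj1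
          have hoQ : Odd (mm n (Q n x.1.val)) := hqnodd.2
          have hoQpos : 0 < mm n (Q n x.1.val) := by
            rcases hoQ with ⟨t, ht⟩; omega
          rw [hevalC x hsix hj0 hj1 hq1 hoQpos]
          have hq1' : Q n (Q n x.1.val) < n.length := by rw [hQQ]; exact x.1.isLt
          have hq2' : 0 < mm n (Q n (Q n x.1.val)) := by
            rw [hQQ]; rcases hoM with ⟨t, ht⟩; omega
          rw [hevalC (⟨⟨Q n x.1.val, hq1⟩, ⟨mm n (Q n x.1.val) - 1, by
                rw [S16.mm_get n _ hq1]; omega⟩⟩ : Cr n) hqnodd.1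
            (show (mm n (Q n x.1.val) - 1) % 2 = 0 by
              rw [Nat.odd_iff] at hoQ; omega)
            (show (mm n (Q n x.1.val) - 1) + 1 = n.get ⟨Q n x.1.val, hq1⟩ by
              rw [S16.mm_get n _ hq1]; omega)
            hq1' hq2']
          refine sigma_ext_val _ _ (show Q n (Q n x.1.val) = x.1.val from hQQ) ?_
          show mm n (Q n (Q n x.1.val)) - 1 = x.2.val
          rw [hQQ, ← S16.mm_get n _ x.1.isLt]
          have : n.get ⟨x.1.val, x.1.isLt⟩ = n.get x.1 := by congr
          omega
      · rw [hevalA x hsix hj1,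
          hevalB (⟨x.1, ⟨x.2.val - 1, by omega⟩⟩ : Cr n) hsix
            (show (x.2.val - 1) % 2 = 0 by omega)
            (show x.2.val - 1 + 1 < n.get x.1 by omega)]
        exact sigma_ext_val _ _ rfl (show x.2.val - 1 + 1 = x.2.val by omega)
  have hff : ∀ x, f x ≠ x := by
    intro x hx
    by_cases hsix : SI n x.1.val
    · rw [hevalSI x hsix] at hx
      exact hφn ⟨x, hsix⟩ (Subtype.ext hx)
    · have hxlt := x.2.isLt
      rcases Nat.mod_two_eq_zero_or_one x.2.val with hj0 | hj1
      · by_cases h2 : x.2.val + 1 < n.get x.1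
        · rw [hevalB x hsix hj0 h2] at hx
          have hv : x.2.val + 1 = x.2.val := congrArg (fun z : Cr n => z.2.val) hx
          omega
        · have hj1 : x.2.val + 1 = n.get x.1 := by omega
          obtain ⟨hoM, hq1, hqnodd, hQQ, hQne, hQiff⟩ := hQFx x hsix hj0 hj1
          have hoQpos : 0 < mm n (Q n x.1.val) := by
            rcases hqnodd.2 with ⟨t, ht⟩; omega
          rw [hevalC x hsix hj0 hj1 hq1 hoQpos] at hx
          exact hQne (congrArg (fun z : Cr n => z.1.val) hx)
      · rw [hevalA x hsix hj1] at hx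
        have hv : x.2.val - 1 = x.2.val := congrArg (fun z : Cr n => z.2.val) hx
        omega
  have hε1 : ∀ x, ε x = 1 ∨ ε x = -1 := by
    intro x
    simp only [hεdef]
    split_ifs <;> simp
  -- ε is constant on pairs
  have hεf : ∀ x, ε (f x) = ε x := by
    intro x
    by_cases hsix : SI n x.1.val
    · rw [hevalSI x hsix, hepsSI x hsix, hepsSI _ (φ ⟨x, hsix⟩).2]
    · have hxlt := x.2.isLt
      rcases Nat.mod_two_eq_zero_or_one x.2.val with hj0 | hj1
      · by_cases h2 : x.2.val + 1 < n.get x.1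
        · -- internal pair, even side
          rw [hevalB x hsix hj0 h2, hepsN (⟨x.1, ⟨x.2.val + 1, h2⟩⟩ : Cr n) hsix,
            hepsN x hsix]
          try dsimp only
          by_cases hd : Even (mm n l) ∧ x.1.val = l ∧ x.2.val < 2
          · rw [if_pos hd,
              if_pos (show Even (mm n l) ∧ x.1.val = l ∧ x.2.val + 1 < 2 from
                ⟨hd.1, hd.2.1, by omega⟩)]
          · have hdy : ¬ (Even (mm n l) ∧ x.1.val = l ∧ x.2.val + 1 < 2) :=
              fun hc => hd ⟨hc.1, hc.2.1, by omega⟩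
            rw [if_neg hd, if_neg hdy]
            have hcx : ¬ (Odd (n.get x.1) ∧ x.2.val + 1 = n.get x.1) :=
              fun hc => by omega
            have hcy : ¬ (Odd (n.get x.1) ∧ x.2.val + 1 + 1 = n.get x.1) := by
              rintro ⟨h1', h2'⟩
              rw [Nat.odd_iff] at h1'
              omega
            rw [if_neg hcx, if_neg hcy]
        · -- leftover crossing
          have hj1 : x.2.val + 1 = n.get x.1 := by omega
          obtain ⟨hoM, hq1, hqnodd, hQQ, hQne, hQiff⟩ := hQFx x hsix hj0 hj1
          have hoQ : Odd (mm n (Q n x.1.val)) := hqnodd.2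
          have hoQpos : 0 < mm n (Q n x.1.val) := by rcases hoQ with ⟨t, ht⟩; omega
          rw [hevalC x hsix hj0 hj1 hq1 hoQpos,
            hepsN (⟨⟨Q n x.1.val, hq1⟩, ⟨mm n (Q n x.1.val) - 1, by
              rw [S16.mm_get n _ hq1]; omega⟩⟩ : Cr n) hqnodd.1,
            hepsN x hsix]
          try dsimp only
          have hdx : ¬ (Even (mm n l) ∧ x.1.val = l ∧ x.2.val < 2) := by
            rintro ⟨h1', h2', _⟩
            rw [← h2'] at h1'
            rw [Nat.even_iff] at h1'
            rw [Nat.odd_iff] at hoM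
            omega
          have hdy : ¬ (Even (mm n l) ∧ Q n x.1.val = l ∧ mm n (Q n x.1.val) - 1 < 2) := by
            rintro ⟨h1', h2', _⟩
            rw [← h2'] at h1'
            rw [Nat.even_iff] at h1'
            rw [Nat.odd_iff] at hoQ
            omega
          rw [if_neg hdx, if_neg hdy,
            if_pos (show Odd (n.get x.1) ∧ x.2.val + 1 = n.get x.1 from
              ⟨by rw [get_eq_mm]; exact hoM, hj1⟩),
            if_pos (show Odd (n.get ⟨Q n x.1.val, hq1⟩) ∧
                (mm n (Q n x.1.val) - 1) + 1 = n.get ⟨Q n x.1.val, hq1⟩ from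
              ⟨by rw [S16.mm_get n _ hq1]; exact hoQ, by rw [S16.mm_get n _ hq1]; omega⟩)]
          by_cases hli : l ≤ x.1.val
          · rw [if_pos hli, if_pos (hQiff.mpr hli)]
          · rw [if_neg hli, if_neg (fun hc => hli (hQiff.mp hc))]
      · -- internal pair, odd side
        rw [hevalA x hsix hj1, hepsN (⟨x.1, ⟨x.2.val - 1, by omega⟩⟩ : Cr n) hsix,
          hepsN x hsix]
        try dsimp only
        by_cases hd : Even (mm n l) ∧ x.1.val = l ∧ x.2.val < 2
        · rw [if_pos hd,
            if_pos (show Even (mm n l) ∧ x.1.val = l ∧ x.2.val - 1 < 2 from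
              ⟨hd.1, hd.2.1, by omega⟩)]
        · have hdy : ¬ (Even (mm n l) ∧ x.1.val = l ∧ x.2.val - 1 < 2) :=
            fun hc => hd ⟨hc.1, hc.2.1, by omega⟩
          rw [if_neg hd, if_neg hdy]
          have hcx : ¬ (Odd (n.get x.1) ∧ x.2.val + 1 = n.get x.1) := by
            rintro ⟨h1', h2'⟩
            rw [Nat.odd_iff] at h1'
            omega
          have hcy : ¬ (Odd (n.get x.1) ∧ x.2.val - 1 + 1 = n.get x.1) := by
            rintro ⟨_, h2'⟩
            omega
          rw [if_neg hcx, if_neg hcy]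
  -- apply the game lemma
  refine S16.canforce_of_pairing n hne f ε hf2 hff hε1 hεf hcard
    (fun w => TEq w [2] ∨ TEq w [-2] ∨ ∃ c : ℤ, TEq w [2, c] ∨ TEq w [-2, c]) ?_
  intro g hG1 hG2
  -- the entries of the resulting word
  have hentry : ∀ (i : ℕ) (hik : i < n.length), (wordOf n g).getD i 0 =
      ∑ jj ∈ Finset.range (n.get ⟨i, hik⟩),
        (fun jj => if h' : jj < n.get ⟨i, hik⟩ then g ⟨⟨i, hik⟩, ⟨jj, h'⟩⟩ else 0) jj := by
    intro i hik
    rw [S16.wordOf_getD n g i hik, S16.syl_sum n g i hik]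
  have hpair : ∀ (i : ℕ) (hik : i < n.length), ¬ SI n i → ∀ a : ℕ,
      ¬ (Even (mm n l) ∧ i = l ∧ 2*a < 2) → ∀ (ha : 2*a+1 < n.get ⟨i, hik⟩),
      g ⟨⟨i, hik⟩, ⟨2*a+1, ha⟩⟩ = - g ⟨⟨i, hik⟩, ⟨2*a, by omega⟩⟩ := by
    intro i hik hnsi' a hnd ha
    have hb := hevalB (⟨⟨i, hik⟩, ⟨2*a, by omega⟩⟩ : Cr n) hnsi'
      (show 2*a % 2 = 0 by omega) (show 2*a+1 < n.get ⟨i, hik⟩ from ha)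
    have hg2 := hG2 (⟨⟨i, hik⟩, ⟨2*a, by omega⟩⟩ : Cr n)
    rw [hb] at hg2
    have he : ε (⟨⟨i, hik⟩, ⟨2*a, by omega⟩⟩ : Cr n) = -1 := by
      rw [hepsN _ hnsi']
      try dsimp only
      rw [if_neg (show ¬ (Even (mm n l) ∧ i = l ∧ 2*a < 2) from hnd),
        if_neg (show ¬ (Odd (n.get ⟨i, hik⟩) ∧ 2*a + 1 = n.get ⟨i, hik⟩) from
          fun hc => by omega)]
    rw [he] at hg2
    rw [hg2]
    ring
  have hE : Efacts n l (wordOf n g) := by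
    refine ⟨?_, ?_, ?_⟩
    · -- NSI even non-special syllables resolve to 0
      intro i hik hnsi' hevi hguard
      rw [hentry i hik]
      apply S16.even_sum_zero _ (by rw [S16.mm_get n i hik]; exact hevi)
      intro a ha
      try dsimp only
      rw [dif_pos ha, dif_pos (show 2*a < n.get ⟨i, hik⟩ by omega)]
      exact hpair i hik hnsi' a (fun hc => (hguard hc.1) hc.2.1) ha
    · -- the special even syllable resolves to ±2
      intro hml
      have h2M : 2 ≤ n.get ⟨l, hlk⟩ := by rw [S16.mm_get n l hlk]; exact hml2 hml
      refine ⟨g ⟨⟨l, hlk⟩, ⟨0, by omega⟩⟩, hG1 _, ?_⟩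
      rw [hentry l hlk]
      rw [S16.dbl_sum _ (by rw [S16.mm_get n l hlk]; exact hml) h2M _ ?_ ?_]
      · try dsimp only
        rw [dif_pos (show 0 < n.get ⟨l, hlk⟩ by omega)]
      · try dsimp only
        rw [dif_pos (show 1 < n.get ⟨l, hlk⟩ by omega),
          dif_pos (show 0 < n.get ⟨l, hlk⟩ by omega)]
        have hb := hevalB (⟨⟨l, hlk⟩, ⟨0, by omega⟩⟩ : Cr n) hnsil
          (by norm_num) (show 0 + 1 < n.get ⟨l, hlk⟩ by omega)
        have hg2 := hG2 (⟨⟨l, hlk⟩, ⟨0, by omega⟩⟩ : Cr n)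
        rw [hb] at hg2
        have he : ε (⟨⟨l, hlk⟩, ⟨0, by omega⟩⟩ : Cr n) = 1 := by
          rw [hepsN _ hnsil]
          try dsimp only
          rw [if_pos (show Even (mm n l) ∧ l = l ∧ 0 < 2 from ⟨hml, rfl, by omega⟩)]
        rw [he, one_mul] at hg2
        exact hg2
      · intro a ha1 ha2
        try dsimp only
        rw [dif_pos ha2, dif_pos (show 2*a < n.get ⟨l, hlk⟩ by omega)]
        exact hpair l hlk hnsil a (fun hc => by omega) ha2
    · -- odd NSI syllables resolve to paired signs
      intro i hik hnoddi
      obtain ⟨hnsi', hoi⟩ := hnoddi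
      obtain ⟨hq1, hqnodd, hQQ, hQne, hQiff⟩ := hQF i (by omega) hik ⟨hnsi', hoi⟩
      have hent : ∀ (j : ℕ) (hjk : j < n.length), ¬ SI n j → Odd (mm n j) →
          ∀ (hpj : n.get ⟨j, hjk⟩ - 1 < n.get ⟨j, hjk⟩),
          (wordOf n g).getD j 0 = g ⟨⟨j, hjk⟩, ⟨n.get ⟨j, hjk⟩ - 1, hpj⟩⟩ := by
        intro j hjk hnsj hoj hpj
        have hMoj : Odd (n.get ⟨j, hjk⟩) := by rw [S16.mm_get n j hjk]; exact hoj
        rw [hentry j hjk]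
        rw [S16.odd_sum_last _ hMoj _ ?_]
        · try dsimp only
          rw [dif_pos hpj]
        · intro a ha
          try dsimp only
          rw [dif_pos ha, dif_pos (show 2*a < n.get ⟨j, hjk⟩ by omega)]
          refine hpair j hjk hnsj a ?_ ha
          rintro ⟨h1', h2', _⟩
          rw [h2'] at hoj
          rw [Nat.even_iff] at h1'
          rw [Nat.odd_iff] at hoj
          omega
      have hMo : Odd (n.get ⟨i, hik⟩) := by rw [S16.mm_get n i hik]; exact hoi
      have hMpos : 0 < n.get ⟨i, hik⟩ := by rcases hMo with ⟨t, ht⟩; omega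
      have hMoQ : Odd (n.get ⟨Q n i, hq1⟩) := by rw [S16.mm_get n _ hq1]; exact hqnodd.2
      have hMposQ : 0 < n.get ⟨Q n i, hq1⟩ := by rcases hMoQ with ⟨t, ht⟩; omega
      constructor
      · rw [hent i hik hnsi' hoi (by omega)]
        exact hG1 _
      · have hlt1 : n.get ⟨i, hik⟩ - 1 < n.get ⟨i, hik⟩ := by omega
        have hltQ : n.get ⟨Q n i, hq1⟩ - 1 < n.get ⟨Q n i, hq1⟩ := by omega
        rw [hent i hik hnsi' hoi hlt1, hent (Q n i) hq1 hqnodd.1 hqnodd.2 hltQ]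
        have hj0 : (n.get ⟨i, hik⟩ - 1) % 2 = 0 := by
          rw [Nat.odd_iff] at hMo; omega
        have hj1 : (n.get ⟨i, hik⟩ - 1) + 1 = n.get ⟨i, hik⟩ := by omega
        have hoQpos : 0 < mm n (Q n i) := by rcases hqnodd.2 with ⟨t, ht⟩; omega
        have hcv := hevalC (⟨⟨i, hik⟩, ⟨n.get ⟨i, hik⟩ - 1, hlt1⟩⟩ : Cr n)
          hnsi' hj0 hj1 hq1 hoQpos
        have hg2 := hG2 (⟨⟨i, hik⟩, ⟨n.get ⟨i, hik⟩ - 1, hlt1⟩⟩ : Cr n)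
        rw [hcv] at hg2
        have hmmQ : mm n (Q n i) - 1 = n.get ⟨Q n i, hq1⟩ - 1 := by
          rw [S16.mm_get n _ hq1]
        have hxy : (⟨⟨Q n i, hq1⟩, ⟨mm n (Q n i) - 1, by
              rw [S16.mm_get n _ hq1]; omega⟩⟩ : Cr n)
            = ⟨⟨Q n i, hq1⟩, ⟨n.get ⟨Q n i, hq1⟩ - 1, hltQ⟩⟩ :=
          sigma_ext_val _ _ rfl hmmQ
        rw [hxy] at hg2
        have he : ε (⟨⟨i, hik⟩, ⟨n.get ⟨i, hik⟩ - 1, hlt1⟩⟩ : Cr n)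
            = if l ≤ i then 1 else -1 := by
          rw [hepsN _ hnsi']
          try dsimp only
          have hdx : ¬ (Even (mm n l) ∧ i = l ∧ n.get ⟨i, hik⟩ - 1 < 2) := by
            rintro ⟨h1', h2', _⟩
            rw [h2'] at hoi
            rw [Nat.even_iff] at h1'
            rw [Nat.odd_iff] at hoi
            omega
          rw [if_neg hdx,
            if_pos (show Odd (n.get ⟨i, hik⟩) ∧
                (n.get ⟨i, hik⟩ - 1) + 1 = n.get ⟨i, hik⟩ from ⟨hMo, hj1⟩)]
        rw [he] at hg2
        exact hg2
  have hgw := hGW (wordOf n g) (S16.wordOf_length n g) hE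
  rw [List.drop_zero] at hgw
  exact hgw.good
end

section
/- Let C be a finite set and N ⊆ C a subset with |N| even and |N| ≥ 2, and suppose |C ∖ N| is even. Then, in the sign-assignment game on C, the second player can force the final assignment f to satisfy Σ_{x∈N} f(x) ∈ {2, −2}; in particular, the second player can force Σ_{x∈N} f(x) ≠ 0. -/
/-- Twice the linking number of the final diagram: the sum of the signs assigned to the
crossings in the set `N` of non-self-intersections. -/
def nsiSum {C : Type*} [DecidableEq C] (N : Finset C) (p : List (C × ℤ)) : ℤ :=
  ((p.filter fun m => decide (m.1 ∈ N)).map Prod.snd).sum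

section MyAux

variable {C : Type*} [Fintype C] [DecidableEq C]

theorem myCanForce_mono {parity : ℕ} {P Q : List (C × ℤ) → Prop}
    (h : CanForce parity P) (hPQ : ∀ p, P p → Q p) : CanForce parity Q := by
  obtain ⟨σ, h1, h2⟩ := h
  exact ⟨σ, h1, fun p hp hl hf => hPQ p (h2 p hp hl hf)⟩

theorem myExists_pairing (S : Finset C) (h : Even S.card) :
    ∃ ι : C → C, (∀ x ∈ S, ι x ∈ S ∧ ι (ι x) = x ∧ ι x ≠ x) ∧ ∀ x ∉ S, ι x = x := by
  classical
  obtain ⟨k, hk⟩ := h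
  let e : {x // x ∈ S} ≃ Fin S.card := S.equivFin
  let j : Fin S.card → Fin S.card := fun i =>
    ⟨if i.val % 2 = 0 then i.val + 1 else i.val - 1, by
      have := i.isLt; split <;> omega⟩
  have hjval : ∀ i : Fin S.card,
      (j i).val = if i.val % 2 = 0 then i.val + 1 else i.val - 1 := fun i => rfl
  have hj : ∀ i, j (j i) = i := by
    intro i
    apply Fin.ext
    rw [hjval (j i), hjval i]
    have := i.isLt
    split <;> split <;> omega
  have hjne : ∀ i, j i ≠ i := by
    intro i hcon
    have h2 := congrArg Fin.val hcon
    rw [hjval i] at h2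
    have := i.isLt
    split at h2 <;> omega
  set f : C → C := fun x => if hx : x ∈ S then ((e.symm (j (e ⟨x, hx⟩))) : C) else x with hf
  have hfpos : ∀ (x : C) (hx : x ∈ S), f x = ((e.symm (j (e ⟨x, hx⟩))) : C) :=
    fun x hx => dif_pos hx
  have hfneg : ∀ x ∉ S, f x = x := fun x hx => dif_neg hx
  refine ⟨f, ?_, hfneg⟩
  intro x hx
  have h1 : f x ∈ S := by rw [hfpos x hx]; exact (e.symm _).2
  refine ⟨h1, ?_, ?_⟩
  · rw [hfpos (f x) h1]
    have hsub : (⟨f x, h1⟩ : {x // x ∈ S}) = e.symm (j (e ⟨x, hx⟩)) := Subtype.ext (hfpos x hx)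
    rw [hsub, Equiv.apply_symm_apply, hj, Equiv.symm_apply_apply]
  · rw [hfpos x hx]
    intro hcon
    have hsub : e.symm (j (e ⟨x, hx⟩)) = ⟨x, hx⟩ := Subtype.ext hcon
    have := congrArg e hsub
    rw [Equiv.apply_symm_apply] at this
    exact hjne _ this

theorem myExists_good_involution (N : Finset C) (hEven : Even N.card) (h2 : 2 ≤ N.card)
    (hcompl : Even Nᶜ.card) :
    ∃ (ι : C → C) (a : C), a ∈ N ∧ (∀ x, ι (ι x) = x) ∧ (∀ x, ι x ≠ x) ∧
      (∀ x, x ∈ N ↔ ι x ∈ N) := by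
  classical
  obtain ⟨ι₁, hι₁, _⟩ := myExists_pairing N hEven
  obtain ⟨ι₂, hι₂, _⟩ := myExists_pairing Nᶜ hcompl
  obtain ⟨a, ha⟩ : N.Nonempty := Finset.card_pos.mp (by omega)
  refine ⟨fun x => if x ∈ N then ι₁ x else ι₂ x, a, ha, ?_, ?_, ?_⟩
  · intro x
    by_cases hx : x ∈ N
    · obtain ⟨h1, h2', h3⟩ := hι₁ x hx
      simp only [if_pos hx, if_pos h1, h2']
    · have hx' : x ∈ Nᶜ := Finset.mem_compl.mpr hx
      obtain ⟨h1, h2', h3⟩ := hι₂ x hx'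
      have h1' : ι₂ x ∉ N := Finset.mem_compl.mp h1
      simp only [if_neg hx, if_neg h1', h2']
  · intro x
    by_cases hx : x ∈ N
    · simpa only [if_pos hx] using (hι₁ x hx).2.2
    · have hx' : x ∈ Nᶜ := Finset.mem_compl.mpr hx
      simpa only [if_neg hx] using (hι₂ x hx').2.2
  · intro x
    by_cases hx : x ∈ N
    · simp only [if_pos hx, hx, true_iff]
      exact (hι₁ x hx).1
    · have hx' : x ∈ Nᶜ := Finset.mem_compl.mpr hx
      simp only [if_neg hx, hx, false_iff]
      exact Finset.mem_compl.mp (hι₂ x hx').1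

end MyAux

open Classical in
noncomputable def myStrat {C : Type*} [DecidableEq C] (N : Finset C) (ι : C → C) (a : C)
    (q : List (C × ℤ)) : C × ℤ :=
  match q.getLast? with
  | none => (a, 1)
  | some m =>
    if ι m.1 ∈ q.map Prod.fst then
      (if h : ∃ y : C, y ∉ q.map Prod.fst then (h.choose, 1) else (a, 1))
    else (ι m.1, if m.1 = a ∨ m.1 = ι a then m.2 else if m.1 ∈ N then -m.2 else 1)

open Classical in
theorem myStrat_some {C : Type*} [DecidableEq C] (N : Finset C) (ι : C → C) (a : C)
    (q : List (C × ℤ)) (m : C × ℤ) (h : q.getLast? = some m) :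
    myStrat N ι a q =
      if ι m.1 ∈ q.map Prod.fst then
        (if h : ∃ y : C, y ∉ q.map Prod.fst then (h.choose, 1) else (a, 1))
      else (ι m.1, if m.1 = a ∨ m.1 = ι a then m.2 else if m.1 ∈ N then -m.2 else 1) := by
  rw [myStrat, h]


theorem myNsiSum_append {C : Type*} [DecidableEq C] (N : Finset C) (p q : List (C × ℤ)) :
    nsiSum N (p ++ q) = nsiSum N p + nsiSum N q := by
  simp [nsiSum, List.filter_append]

theorem myNsiSum_pair {C : Type*} [DecidableEq C] (N : Finset C) (m0 m1 : C × ℤ) :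
    nsiSum N [m0, m1] = (if m0.1 ∈ N then m0.2 else 0) + (if m1.1 ∈ N then m1.2 else 0) := by
  simp only [nsiSum, List.filter_cons, List.filter_nil]
  split_ifs <;> simp_all

theorem myAux_force {C : Type*} [Fintype C] [DecidableEq C]
    (N : Finset C) (ι : C → C) (a : C)
    (hinv : ∀ x, ι (ι x) = x) (hne : ∀ x, ι x ≠ x)
    (hN : ∀ x, x ∈ N ↔ ι x ∈ N) (ha : a ∈ N)
    (hcard : Even (Fintype.card C)) :
    CanForce 1 (fun p : List (C × ℤ) => nsiSum N p = 2 ∨ nsiSum N p = -2) := by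
  classical
  refine ⟨myStrat N ι a, ?_, ?_⟩
  · -- legality of the strategy
    intro q hq hpar hlen
    have hq0 : q ≠ [] := by
      intro h; subst h; simp at hpar
    have hm : q.getLast? = some (q.getLast hq0) := List.getLast?_eq_getLast hq0
    set m := q.getLast hq0 with hmdef
    rw [myStrat_some N ι a q m hm]
    by_cases hmem : ι m.1 ∈ q.map Prod.fst
    · rw [if_pos hmem]
      have hex : ∃ y : C, y ∉ q.map Prod.fst := by
        by_contra hc
        push_neg at hc
        have h1 : Fintype.card C ≤ (q.map Prod.fst).toFinset.card := by
          rw [← Finset.card_univ]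
          apply Finset.card_le_card
          intro y _
          exact List.mem_toFinset.mpr (hc y)
        have h2 : (q.map Prod.fst).toFinset.card ≤ q.length := by
          calc (q.map Prod.fst).toFinset.card ≤ (q.map Prod.fst).length :=
                List.toFinset_card_le _
            _ = q.length := List.length_map _
        omega
      rw [dif_pos hex]
      exact ⟨hex.choose_spec, Or.inl rfl⟩
    · rw [if_neg hmem]
      refine ⟨hmem, ?_⟩
      have hmq : m ∈ q := List.mem_of_getLast? hm
      rcases hq.2 m hmq with h | h <;> (simp only [] ; split_ifs <;> omega)
  · -- the strategy forces the outcome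
    intro p hp hlen hfol
    obtain ⟨k, hk⟩ := hcard
    have key : ∀ j, 2 * j ≤ p.length →
        (∀ x, x ∈ (p.take (2*j)).map Prod.fst → ι x ∈ (p.take (2*j)).map Prod.fst) ∧
        (a ∈ (p.take (2*j)).map Prod.fst →
          nsiSum N (p.take (2*j)) = 2 ∨ nsiSum N (p.take (2*j)) = -2) ∧
        (a ∉ (p.take (2*j)).map Prod.fst → nsiSum N (p.take (2*j)) = 0) := by
      intro j
      induction j with
      | zero => intro _; simp [nsiSum]
      | succ j ih =>
        intro hle
        obtain ⟨hclosed, hyes, hno⟩ := ih (by omega)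
        have h0 : 2*j < p.length := by omega
        have h1 : 2*j + 1 < p.length := by omega
        set m0 := p.get ⟨2*j, h0⟩ with hm0
        set x := m0.1 with hx
        set s := m0.2 with hs
        have ht1 : p.take (2*j+1) = p.take (2*j) ++ [m0] := by
          rw [← List.take_concat_get h0, List.concat_eq_append]
          rfl
        have hlast : (p.take (2*j+1)).getLast? = some m0 := by
          rw [ht1]; exact List.getLast?_concat
        -- x is not among the first 2j crossings
        have hnodup : ((p.take (2*j+1)).map Prod.fst).Nodup := by
          rw [List.map_take]
          exact hp.1.sublist (List.take_sublist _ _)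
        have hxF : x ∉ (p.take (2*j)).map Prod.fst := by
          have : (p.take (2*j+1)).map Prod.fst = (p.take (2*j)).map Prod.fst ++ [x] := by
            rw [ht1, List.map_append]; rfl
          rw [this] at hnodup
          intro hcon
          exact (List.disjoint_of_nodup_append hnodup) hcon (List.mem_singleton_self x)
        have hιxF : ι x ∉ (p.take (2*j)).map Prod.fst := by
          intro hcon
          have := hclosed (ι x) hcon
          rw [hinv] at this
          exact hxF this
        have hιx1 : ι x ∉ (p.take (2*j+1)).map Prod.fst := by
          rw [ht1, List.map_append]
          intro hcon
          rcases List.mem_append.mp hcon with h | h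
          · exact hιxF h
          · have : ι x = x := by simpa using h
            exact hne x this
        -- the strategy's reply
        have hmove : p[2*j+1]'h1 =
            (ι x, if x = a ∨ x = ι a then s else if x ∈ N then -s else 1) := by
          have hh := hfol (2*j+1) h1 (by omega)
          rw [myStrat_some N ι a _ m0 hlast, if_neg hιx1] at hh
          exact hh
        have ht2 : p.take (2*(j+1)) = p.take (2*j) ++
            [m0, (ι x, if x = a ∨ x = ι a then s else if x ∈ N then -s else 1)] := by
          have e1 : 2*(j+1) = (2*j+1)+1 := by ring
          rw [e1, ← List.take_concat_get h1, List.concat_eq_append, ht1, hmove]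
          simp
        have hF' : (p.take (2*(j+1))).map Prod.fst =
            (p.take (2*j)).map Prod.fst ++ [x, ι x] := by
          rw [ht2, List.map_append]; rfl
        have hsum : nsiSum N (p.take (2*(j+1))) = nsiSum N (p.take (2*j)) +
            ((if x ∈ N then s else 0) +
             (if ι x ∈ N then (if x = a ∨ x = ι a then s else if x ∈ N then -s else 1) else 0)) := by
          rw [ht2, myNsiSum_append, myNsiSum_pair]
        have hsval : s = 1 ∨ s = -1 := hp.2 m0 (List.get_mem p ⟨2*j, h0⟩)
        have hclosed' : ∀ y, y ∈ (p.take (2*(j+1))).map Prod.fst →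
            ι y ∈ (p.take (2*(j+1))).map Prod.fst := by
          intro y hy
          rw [hF'] at hy ⊢
          rcases List.mem_append.mp hy with h | h
          · exact List.mem_append.mpr (Or.inl (hclosed y h))
          · simp only [List.mem_cons, List.mem_singleton] at h
            rcases h with h | h | h
            · subst h
              exact List.mem_append.mpr (Or.inr (by simp))
            · subst h
              rw [hinv]
              exact List.mem_append.mpr (Or.inr (by simp))
            · simp at h
        refine ⟨hclosed', ?_, ?_⟩
        · -- a has been played
          intro haF'
          by_cases hxab : x = a ∨ x = ι a
          · have haF : a ∉ (p.take (2*j)).map Prod.fst := by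
              rcases hxab with h | h
              · rw [← h]; exact hxF
              · intro hcon
                have := hclosed a hcon
                rw [← h] at this
                exact hxF this
            have hxN : x ∈ N := by
              rcases hxab with h | h
              · rw [h]; exact ha
              · rw [h]; exact (hN a).mp ha
            have hsum0 := hno haF
            rw [hsum, hsum0, if_pos hxN, if_pos ((hN x).mp hxN), if_pos hxab]
            rcases hsval with h | h <;> [left; right] <;> rw [h] <;> ring
          · -- not the special pair: contribution zero; a must have been in before
            have hax : a ≠ x := fun h => hxab (Or.inl h.symm)
            have haιx : a ≠ ι x := by
              intro h
              apply hxab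
              right
              rw [h, hinv]
            have haF : a ∈ (p.take (2*j)).map Prod.fst := by
              rw [hF'] at haF'
              rcases List.mem_append.mp haF' with h | h
              · exact h
              · simp only [List.mem_cons, List.mem_singleton] at h
                rcases h with h | h | h
                · exact absurd h hax
                · exact absurd h haιx
                · simp at h
            have hcontrib : ((if x ∈ N then s else 0) +
                (if ι x ∈ N then (if x = a ∨ x = ι a then s else if x ∈ N then -s else 1) else 0)) = 0 := by
              by_cases hxN : x ∈ N
              · rw [if_pos hxN, if_pos ((hN x).mp hxN), if_neg hxab, if_pos hxN]; ring
              · rw [if_neg hxN, if_neg (fun h => hxN ((hN x).mpr h))]; ring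
            rw [hsum, hcontrib, add_zero]
            exact hyes haF
        · -- a has not been played
          intro haF'
          rw [hF'] at haF'
          simp only [List.mem_append, List.mem_cons, List.mem_singleton, not_or] at haF'
          obtain ⟨haF, hax, haιx, -⟩ := haF'
          have hxab : ¬(x = a ∨ x = ι a) := by
            rintro (h | h)
            · exact hax h.symm
            · apply haιx
              rw [h, hinv]
          have hcontrib : ((if x ∈ N then s else 0) +
              (if ι x ∈ N then (if x = a ∨ x = ι a then s else if x ∈ N then -s else 1) else 0)) = 0 := by
            by_cases hxN : x ∈ N
            · rw [if_pos hxN, if_pos ((hN x).mp hxN), if_neg hxab, if_pos hxN]; ring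
            · rw [if_neg hxN, if_neg (fun h => hxN ((hN x).mpr h))]; ring
          rw [hsum, hcontrib, add_zero]
          exact hno haF
    have hfull := key k (by omega)
    have htake : p.take (2*k) = p := List.take_of_length_le (by omega)
    rw [htake] at hfull
    have haMem : a ∈ p.map Prod.fst := by
      have hcard' : (p.map Prod.fst).toFinset = Finset.univ := by
        apply Finset.eq_univ_of_card
        rw [List.toFinset_card_of_nodup hp.1, List.length_map, hlen]
      rw [← List.mem_toFinset, hcard']
      exact Finset.mem_univ a
    exact hfull.2.1 haMem

/-- in the sign-assignment game on a finite set `C` with `N ⊆ C`,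
`|N|` even, `|N| ≥ 2` and `|C ∖ N|` even, the second player can force
`Σ_{x ∈ N} f(x) ∈ {2, -2}`; in particular the second player can force
`Σ_{x ∈ N} f(x) ≠ 0`. -/
theorem second_forces_nonzero_linking {C : Type*} [Fintype C] [DecidableEq C]
    (N : Finset C) (hEven : Even N.card) (h2 : 2 ≤ N.card)
    (hcompl : Even Nᶜ.card) :
    CanForce 1 (fun p : List (C × ℤ) => nsiSum N p = 2 ∨ nsiSum N p = -2) ∧
    CanForce 1 (fun p : List (C × ℤ) => nsiSum N p ≠ 0) := by
  obtain ⟨ι, a, ha, hinv, hne, hN⟩ := myExists_good_involution N hEven h2 hcompl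
  have hcard : Even (Fintype.card C) := by
    have hsum : N.card + Nᶜ.card = Fintype.card C := Finset.card_add_card_compl N
    rw [← hsum]
    exact hEven.add hcompl
  have h1 := myAux_force N ι a hinv hne hN ha hcard
  refine ⟨h1, myCanForce_mono h1 ?_⟩
  rintro p (h | h) <;> omega
end

section
/- Let C be a finite set and N ⊆ C a subset with |N| even and |N| ≥ 2, and suppose |C ∖ N| is odd. Then, in the sign-assignment game on C, the first player can force the final assignment f to satisfy Σ_{x∈N} f(x) ∈ {2, −2}; in particular, the first player can force Σ_{x∈N} f(x) ≠ 0. -/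
section Aux
variable {C : Type*} [Fintype C] [DecidableEq C]

/-- Number of moves of `q` made at crossings in `N`. -/
def aCount (N : Finset C) (q : List (C × ℤ)) : ℕ :=
  ((q.map Prod.fst).filter fun x => decide (x ∈ N)).length

def availSet (p : List (C × ℤ)) : Finset C :=
  Finset.univ.filter fun x => x ∉ p.map Prod.fst

def targetSet (N : Finset C) (p : List (C × ℤ)) : Finset C :=
  match p.getLast? with
  | none => availSet p \ N
  | some m => if m.1 ∈ N then availSet p ∩ N else availSet p \ N

noncomputable def stratC (N : Finset C) (d : C) (p : List (C × ℤ)) : C :=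
  if h : (targetSet N p).Nonempty then h.choose
  else if h2 : (availSet p).Nonempty then h2.choose else d

noncomputable def strat (N : Finset C) (d : C) (p : List (C × ℤ)) : C × ℤ :=
  (stratC N d p, if nsiSum N p = 1 ∨ nsiSum N p = -3 then 1 else -1)

lemma targetSet_subset (N : Finset C) (p : List (C × ℤ)) : targetSet N p ⊆ availSet p := by
  unfold targetSet
  rcases p.getLast? with _ | m
  · exact Finset.sdiff_subset
  · dsimp only; split
    · exact Finset.inter_subset_left
    · exact Finset.sdiff_subset

lemma stratC_mem_avail (N : Finset C) (d : C) (p : List (C × ℤ))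
    (h : (availSet p).Nonempty) : stratC N d p ∈ availSet p := by
  unfold stratC
  by_cases h1 : (targetSet N p).Nonempty
  · rw [dif_pos h1]; exact targetSet_subset N p h1.choose_spec
  · rw [dif_neg h1, dif_pos h]; exact h.choose_spec

lemma stratC_mem_target (N : Finset C) (d : C) (p : List (C × ℤ))
    (h : (targetSet N p).Nonempty) : stratC N d p ∈ targetSet N p := by
  unfold stratC; rw [dif_pos h]; exact h.choose_spec

lemma legalPlay_take {p : List (C × ℤ)} (h : LegalPlay p) (k : ℕ) :
    LegalPlay (p.take k) := by
  constructor
  · rw [List.map_take]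
    exact h.1.sublist (List.take_sublist _ _)
  · exact fun m hm => h.2 m (List.mem_of_mem_take hm)

lemma take_succ_get (p : List (C × ℤ)) (n : ℕ) (h : n < p.length) :
    p.take (n+1) = p.take n ++ [p.get ⟨n,h⟩] := by
  rw [List.take_succ]; simp [List.getElem?_eq_getElem h]

lemma nsiSum_concat (N : Finset C) (q : List (C × ℤ)) (m : C × ℤ) :
    nsiSum N (q ++ [m]) = nsiSum N q + if m.1 ∈ N then m.2 else 0 := by
  by_cases h : m.1 ∈ N <;> simp [nsiSum, List.filter_append, h]

lemma aCount_concat (N : Finset C) (q : List (C × ℤ)) (m : C × ℤ) :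
    aCount N (q ++ [m]) = aCount N q + if m.1 ∈ N then 1 else 0 := by
  by_cases h : m.1 ∈ N <;> simp [aCount, List.filter_append, h]

lemma aCount_eq (N : Finset C) {q : List (C × ℤ)} (h : (q.map Prod.fst).Nodup) :
    aCount N q = ((q.map Prod.fst).toFinset ∩ N).card := by
  have h2 : ((q.map Prod.fst).filter fun x => decide (x ∈ N)).Nodup := h.filter _
  rw [aCount, ← List.toFinset_card_of_nodup h2, List.toFinset_filter]
  congr 1
  ext x
  simp [Finset.mem_inter]

lemma aCount_add_compl (N : Finset C) (q : List (C × ℤ)) :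
    aCount N q + aCount Nᶜ q = q.length := by
  unfold aCount
  rw [← (List.length_map Prod.fst : (q.map Prod.fst).length = q.length)]
  generalize q.map Prod.fst = l
  have hpred : (fun x : C => decide (x ∈ Nᶜ)) = (fun x => !decide (x ∈ N)) := by
    funext x; simp [Finset.mem_compl]
  rw [hpred]
  induction l with
  | nil => simp
  | cons a l ih => by_cases h : a ∈ N <;> simp [h, List.filter_cons] <;> omega

lemma aCount_le (N : Finset C) {q : List (C × ℤ)} (h : (q.map Prod.fst).Nodup) :
    aCount N q ≤ N.card := by
  rw [aCount_eq N h]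
  exact Finset.card_le_card Finset.inter_subset_right

lemma exists_unplayed (N : Finset C) {q : List (C × ℤ)} (h : (q.map Prod.fst).Nodup)
    (hlt : aCount N q < N.card) : ∃ x, x ∈ N ∧ x ∉ q.map Prod.fst := by
  rw [aCount_eq N h] at hlt
  have : (N \ (q.map Prod.fst).toFinset).Nonempty := by
    rw [← Finset.card_pos]
    have := Finset.card_inter_add_card_sdiff N (q.map Prod.fst).toFinset
    rw [Finset.inter_comm] at this
    omega
  obtain ⟨x, hx⟩ := this
  simp only [Finset.mem_sdiff, List.mem_toFinset] at hx
  exact ⟨x, hx.1, hx.2⟩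

lemma aCount_full (N : Finset C) {p : List (C × ℤ)} (h : (p.map Prod.fst).Nodup)
    (hlen : p.length = Fintype.card C) : aCount N p = N.card := by
  rw [aCount_eq N h]
  have h1 : (p.map Prod.fst).toFinset = Finset.univ := by
    apply Finset.eq_univ_of_card
    rw [List.toFinset_card_of_nodup h, List.length_map, hlen]
  rw [h1, Finset.univ_inter]

lemma get_not_mem_take {p : List (C × ℤ)} (h : (p.map Prod.fst).Nodup) (n : ℕ)
    (hn : n < p.length) : (p.get ⟨n,hn⟩).1 ∉ (p.take n).map Prod.fst := by
  set l := p.map Prod.fst with hl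
  have hn' : n < l.length := by simp [hl, hn]
  have hg : (p.get ⟨n,hn⟩).1 = l.get ⟨n,hn'⟩ := by simp [hl]
  rw [List.map_take, hg, ← hl]
  have hd : l.get ⟨n,hn'⟩ ∈ l.drop n := by
    rw [List.drop_eq_getElem_cons hn']; exact List.mem_cons_self
  intro hmem
  have h2 : l.Nodup := h
  rw [← List.take_append_drop n l] at h2
  exact (List.disjoint_of_nodup_append h2) hmem hd
end Aux

section Main
variable {C : Type*} [Fintype C] [DecidableEq C]

/-- The invariant maintained after each first-player move. -/
def GameInv (N : Finset C) (q : List (C × ℤ)) : Prop :=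
  (nsiSum N q = 2 ∨ nsiSum N q = -2 ∨ (nsiSum N q = 0 ∧ aCount N q = 0)) ∧
    Even (aCount N q)

lemma avail_nonempty {p : List (C × ℤ)} (hp : LegalPlay p)
    (hlt : p.length < Fintype.card C) : (availSet p).Nonempty := by
  have h1 : availSet p = ((p.map Prod.fst).toFinset)ᶜ := by
    ext x; simp [availSet]
  rw [← Finset.card_pos, h1, Finset.card_compl,
    List.toFinset_card_of_nodup hp.1, List.length_map]
  omega

lemma strat_legal (N : Finset C) (d : C) : LegalStrat 0 (strat N d) := by
  intro p hp _ hlt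
  refine ⟨?_, ?_⟩
  · have h := stratC_mem_avail N d p (avail_nonempty hp hlt)
    simp only [availSet, Finset.mem_filter] at h
    exact h.2
  · simp only [strat]
    split <;> simp

lemma invariant (N : Finset C) (d : C) (hEven : Even N.card) (h2 : 2 ≤ N.card)
    (hcompl : Odd Nᶜ.card) {p : List (C × ℤ)} (hp : LegalPlay p)
    (hf : Follows 0 (strat N d) p) :
    ∀ j, 2*j+1 ≤ p.length → GameInv N (p.take (2*j+1)) := by
  intro j
  induction j with
  | zero =>
    intro hlen
    have h0 : (0:ℕ) < p.length := by omega
    have hget : p.get ⟨0, h0⟩ = strat N d (p.take 0) := hf 0 h0 rfl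
    rw [List.take_zero] at hget
    have htake : p.take 1 = [p.get ⟨0, h0⟩] := by
      rw [show (1:ℕ) = 0 + 1 from rfl, take_succ_get p 0 h0, List.take_zero]
      simp
    have htarget : targetSet N ([] : List (C × ℤ)) = Nᶜ := by
      ext x; simp [targetSet, availSet]
    have hne : (targetSet N ([] : List (C × ℤ))).Nonempty := by
      rw [htarget, ← Finset.card_pos]
      exact hcompl.pos
    have hmem := stratC_mem_target N d [] hne
    rw [htarget, Finset.mem_compl] at hmem
    have hfst : (p.get ⟨0, h0⟩).1 ∉ N := by rw [hget]; exact hmem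
    have hns : nsiSum N (p.take 1) = 0 := by
      rw [htake, show ([p.get ⟨0, h0⟩] : List (C × ℤ)) = [] ++ [p.get ⟨0, h0⟩] from rfl,
        nsiSum_concat, if_neg hfst]
      simp [nsiSum]
    have hac : aCount N (p.take 1) = 0 := by
      rw [htake, show ([p.get ⟨0, h0⟩] : List (C × ℤ)) = [] ++ [p.get ⟨0, h0⟩] from rfl,
        aCount_concat, if_neg hfst]
      simp [aCount]
    exact ⟨Or.inr (Or.inr ⟨hns, hac⟩), by rw [hac]; exact Even.zero⟩
  | succ j ih =>
    intro hlen
    set k := 2*j+1 with hk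
    have hik : 2*j+1 ≤ p.length := by omega
    have hInv := ih hik
    set q := p.take k with hqdef
    have hqlen : q.length = k := by
      rw [hqdef, List.length_take]; omega
    have hk1 : k < p.length := by omega
    have hk2 : k+1 < p.length := by omega
    set m := p.get ⟨k, hk1⟩ with hmdef
    set m' := p.get ⟨k+1, hk2⟩ with hm'def
    have hq1 : p.take (k+1) = q ++ [m] := take_succ_get p k hk1
    have hq2 : p.take (k+2) = (q ++ [m]) ++ [m'] := by
      rw [take_succ_get p (k+1) hk2, hq1]
    have hgoal : 2*(j+1)+1 = k+2 := by omega
    rw [hgoal, hq2]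
    have hm' : m' = strat N d (q ++ [m]) := by
      rw [← hq1]; exact hf (k+1) hk2 (by omega)
    have hleg1 : LegalPlay (p.take (k+1)) := legalPlay_take hp (k+1)
    rw [hq1] at hleg1
    have hmq : m.1 ∉ q.map Prod.fst := get_not_mem_take hp.1 k hk1
    have hms : m.2 = 1 ∨ m.2 = -1 := hp.2 m (List.get_mem p _)
    have hlast : (q ++ [m]).getLast? = some m := List.getLast?_concat
    obtain ⟨hS, hEv⟩ := hInv
    obtain ⟨e, he⟩ := hEv
    obtain ⟨eN, heN⟩ := hEven
    by_cases hm : m.1 ∈ N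
    · -- opponent moved in N; we respond in N steering the sum to ±2
      have htarget : targetSet N (q ++ [m]) = availSet (q ++ [m]) ∩ N := by
        simp [targetSet, hlast, hm]
      have ha1 : aCount N (q ++ [m]) = aCount N q + 1 := by
        rw [aCount_concat, if_pos hm]
      have hle : aCount N (q ++ [m]) ≤ N.card := aCount_le N hleg1.1
      have hlt : aCount N (q ++ [m]) < N.card := by omega
      obtain ⟨x, hxN, hxun⟩ := exists_unplayed N hleg1.1 hlt
      have hne : (targetSet N (q ++ [m])).Nonempty := by
        refine ⟨x, ?_⟩
        rw [htarget]
        simp only [availSet, Finset.mem_inter, Finset.mem_filter, Finset.mem_univ, true_and]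
        exact ⟨hxun, hxN⟩
      have hmem := stratC_mem_target N d (q ++ [m]) hne
      rw [htarget, Finset.mem_inter] at hmem
      have hm'N : m'.1 ∈ N := by rw [hm']; exact hmem.2
      have hsum : nsiSum N ((q ++ [m]) ++ [m']) =
          nsiSum N q + m.2 +
            (if nsiSum N q + m.2 = 1 ∨ nsiSum N q + m.2 = -3 then 1 else -1) := by
        rw [nsiSum_concat, if_pos hm'N, nsiSum_concat, if_pos hm]
        congr 1
        rw [hm']
        simp only [strat]
        rw [nsiSum_concat, if_pos hm]
      have hacc : aCount N ((q ++ [m]) ++ [m']) = aCount N q + 2 := by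
        rw [aCount_concat, if_pos hm'N, ha1]
      refine ⟨?_, by rw [hacc]; exact ⟨e+1, by omega⟩⟩
      rcases hS with h | h | h <;> rcases hms with h' | h' <;> rw [hsum, h'] <;>
        first
        | (rw [h]; norm_num)
        | (rw [h.1]; norm_num)
    · -- opponent moved in the complement; we respond in the complement
      have htarget : targetSet N (q ++ [m]) = availSet (q ++ [m]) \ N := by
        simp [targetSet, hlast, hm]
      have ha1 : aCount N (q ++ [m]) = aCount N q := by
        rw [aCount_concat, if_neg hm]; ring
      have hlenq1 : (q ++ [m]).length = k + 1 := by simp [hqlen]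
      have hbc : aCount N (q ++ [m]) + aCount Nᶜ (q ++ [m]) = k + 1 :=
        hlenq1 ▸ aCount_add_compl N (q ++ [m])
      have hle : aCount Nᶜ (q ++ [m]) ≤ Nᶜ.card := aCount_le Nᶜ hleg1.1
      obtain ⟨cN, hcN⟩ := hcompl
      have hlt : aCount Nᶜ (q ++ [m]) < Nᶜ.card := by omega
      obtain ⟨x, hxN, hxun⟩ := exists_unplayed Nᶜ hleg1.1 hlt
      rw [Finset.mem_compl] at hxN
      have hne : (targetSet N (q ++ [m])).Nonempty := by
        refine ⟨x, ?_⟩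
        rw [htarget]
        simp only [availSet, Finset.mem_sdiff, Finset.mem_filter, Finset.mem_univ, true_and]
        exact ⟨hxun, hxN⟩
      have hmem := stratC_mem_target N d (q ++ [m]) hne
      rw [htarget, Finset.mem_sdiff] at hmem
      have hm'N : m'.1 ∉ N := by rw [hm']; exact hmem.2
      have hsum : nsiSum N ((q ++ [m]) ++ [m']) = nsiSum N q := by
        rw [nsiSum_concat, if_neg hm'N, nsiSum_concat, if_neg hm]; ring
      have hacc : aCount N ((q ++ [m]) ++ [m']) = aCount N q := by
        rw [aCount_concat, if_neg hm'N, ha1]; ring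
      refine ⟨?_, by rw [hacc]; exact ⟨e, he⟩⟩
      rw [hsum, hacc]
      exact hS

end Main


/-- in the sign-assignment game on a finite set `C` with `N ⊆ C`,
`|N|` even, `|N| ≥ 2` and `|C ∖ N|` odd, the first player can force
`Σ_{x ∈ N} f(x) ∈ {2, -2}`; in particular the first player can force
`Σ_{x ∈ N} f(x) ≠ 0`. -/
theorem first_forces_nonzero_linking {C : Type*} [Fintype C] [DecidableEq C]
    (N : Finset C) (hEven : Even N.card) (h2 : 2 ≤ N.card)
    (hcompl : Odd Nᶜ.card) :
    CanForce 0 (fun p : List (C × ℤ) => nsiSum N p = 2 ∨ nsiSum N p = -2) ∧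
    CanForce 0 (fun p : List (C × ℤ) => nsiSum N p ≠ 0) := by
  obtain ⟨d, hd⟩ : N.Nonempty := Finset.card_pos.1 (by omega)
  have hcard : Fintype.card C = N.card + Nᶜ.card :=
    (Finset.card_add_card_compl N).symm
  have hmain : ∀ p : List (C × ℤ), LegalPlay p → p.length = Fintype.card C →
      Follows 0 (strat N d) p → nsiSum N p = 2 ∨ nsiSum N p = -2 := by
    intro p hp hlen hf
    have hodd : Odd (Fintype.card C) := by
      rw [hcard]; exact hEven.add_odd hcompl
    obtain ⟨j, hj⟩ := hodd
    have hInv := invariant N d hEven h2 hcompl hp hf j (by omega)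
    have hfull : p.take (2*j+1) = p := by
      have : 2*j+1 = p.length := by omega
      rw [this, List.take_length]
    rw [hfull] at hInv
    obtain ⟨hS, _⟩ := hInv
    rcases hS with h | h | h
    · exact Or.inl h
    · exact Or.inr h
    · exfalso
      have := aCount_full N hp.1 hlen
      omega
  constructor
  · exact ⟨strat N d, strat_legal N d, hmain⟩
  · refine ⟨strat N d, strat_legal N d, fun p hp hlen hf => ?_⟩
    rcases hmain p hp hlen hf with h | h <;> rw [h] <;> norm_num
end
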